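/- arXiv:math/0404318 — 2 statements merged into one kernel-verified Lean document; each statement's English description precedes it below -/
import Mathlib

section
/- Let δ' be an ordinal with max(κ,δ) ≤ δ' ≤ λ and θ' a cardinal with θ ≤ θ' ≤ κ, and assume there exist a [δ]^{<θ}-normal ideal and a [δ']^{<θ'}-normal ideal on P_κ(λ). Assume |δ|^{<θ̄} < |δ'|^{<θ̄'} < λ. Then NS^{[δ']^{<θ'}}_{κ,λ} ≠ NS^{[δ]^{<θ}}_{κ,λ} | A for every A ∈ (NS^{[δ]^{<θ}}_{κ,λ})⁺. -/
open Cardinal Set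

namespace PklNormal

/-- `P_κ(l)`: the collection of subsets of (the set of ordinals below) `l`
of cardinality `< κ`. -/
def PSet (κ : Cardinal.{0}) (l : Ordinal.{0}) : Set (Set Ordinal.{0}) :=
  {a | a ⊆ Set.Iio l ∧ #↥a < Cardinal.lift.{1} κ}

/-- `e ∈ P_{|a ∩ σ|}(a ∩ γ)`. -/
def inP (σ : Cardinal.{0}) (γ : Ordinal.{0}) (a e : Set Ordinal.{0}) : Prop :=
  e ⊆ a ∩ Set.Iio γ ∧ #↥e < #↥(a ∩ Set.Iio σ.ord)

/-- The collection `I_{κ,l}` of non-cofinal subsets of `P_κ(l)`. -/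
def Ikl (κ : Cardinal.{0}) (l : Ordinal.{0}) : Set (Set (Set Ordinal.{0})) :=
  {B | B ⊆ PSet κ l ∧ ∃ a ∈ PSet κ l, ∀ b ∈ B, ¬ a ⊆ b}

/-- An ideal on `P_κ(l)`. -/
structure IsIdeal (κ : Cardinal.{0}) (l : Ordinal.{0})
    (K : Set (Set (Set Ordinal.{0}))) : Prop where
  mem_subset : ∀ B ∈ K, B ⊆ PSet κ l
  subset_mem : ∀ B ∈ K, ∀ C ⊆ B, C ∈ K
  sUnion_mem : ∀ Y ⊆ K, Y.Nonempty → #↥Y < Cardinal.lift.{1} κ → ⋃₀ Y ∈ K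
  nonCofinal_subset : Ikl κ l ⊆ K
  univ_not_mem : PSet κ l ∉ K

/-- `K⁺`: the subsets of `P_κ(l)` not in `K`. -/
def plus (κ : Cardinal.{0}) (l : Ordinal.{0}) (K : Set (Set (Set Ordinal.{0}))) :
    Set (Set (Set Ordinal.{0})) :=
  {B | B ⊆ PSet κ l ∧ B ∉ K}

/-- `K*`: the subsets of `P_κ(l)` whose complement is in `K`. -/
def star (κ : Cardinal.{0}) (l : Ordinal.{0}) (K : Set (Set (Set Ordinal.{0}))) :
    Set (Set (Set Ordinal.{0})) :=
  {B | B ⊆ PSet κ l ∧ PSet κ l \ B ∈ K}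

/-- `K|A`. -/
def restrict (κ : Cardinal.{0}) (l : Ordinal.{0}) (K : Set (Set (Set Ordinal.{0})))
    (A : Set (Set Ordinal.{0})) : Set (Set (Set Ordinal.{0})) :=
  {B | B ⊆ PSet κ l ∧ B ∩ A ∈ K}

/-- `∇^{[γ]^{<σ}} J`. -/
def nabla (κ : Cardinal.{0}) (l : Ordinal.{0}) (σ : Cardinal.{0}) (γ : Ordinal.{0})
    (J : Set (Set (Set Ordinal.{0}))) : Set (Set (Set Ordinal.{0})) :=
  {B | ∃ F : Set Ordinal.{0} → Set (Set Ordinal.{0}),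
    (∀ e ∈ PSet σ γ, F e ∈ J) ∧
    B ⊆ {a | a ∈ PSet κ l ∧ a ∩ Set.Iio σ.ord = ∅} ∪
      ⋃ e ∈ PSet σ γ, {a | a ∈ F e ∧ inP σ γ a e}}

/-- `J` is `[γ]^{<σ}`-normal. -/
def IsNormal (κ : Cardinal.{0}) (l : Ordinal.{0}) (σ : Cardinal.{0}) (γ : Ordinal.{0})
    (J : Set (Set (Set Ordinal.{0}))) : Prop :=
  J = nabla κ l σ γ J

def IsNormalIdeal (κ : Cardinal.{0}) (l : Ordinal.{0}) (σ : Cardinal.{0}) (γ : Ordinal.{0})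
    (J : Set (Set (Set Ordinal.{0}))) : Prop :=
  IsIdeal κ l J ∧ IsNormal κ l σ γ J

/-- `N` is the smallest `[γ]^{<σ}`-normal ideal on `P_κ(l)`. -/
def IsLeastNormalIdeal (κ : Cardinal.{0}) (l : Ordinal.{0}) (σ : Cardinal.{0}) (γ : Ordinal.{0})
    (N : Set (Set (Set Ordinal.{0}))) : Prop :=
  IsNormalIdeal κ l σ γ N ∧ ∀ J, IsNormalIdeal κ l σ γ J → N ⊆ J

/-- `∇^δ K`, the ordinal-indexed diagonal union. -/
def nablaOrd (κ : Cardinal.{0}) (l : Ordinal.{0}) (δ : Ordinal.{0})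
    (K : Set (Set (Set Ordinal.{0}))) : Set (Set (Set Ordinal.{0})) :=
  {B | ∃ F : Ordinal.{0} → Set (Set Ordinal.{0}),
    (∀ α < δ, F α ∈ K) ∧
    B ⊆ {a | a ∈ PSet κ l ∧ (0 : Ordinal) ∉ a} ∪
      ⋃ α ∈ Set.Iio δ, {a | a ∈ F α ∧ α ∈ a}}

/-- `J` is `δ`-normal. -/
def IsOrdNormal (κ : Cardinal.{0}) (l : Ordinal.{0}) (δ : Ordinal.{0})
    (J : Set (Set (Set Ordinal.{0}))) : Prop :=
  J = nablaOrd κ l δ J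

/-- `θ̄`: equals `θ` if `θ < κ`, or if `θ = κ` and `κ` is a limit cardinal;
equals `ν` if `θ = κ = ν⁺`. -/
noncomputable def thetaBar (κ θ : Cardinal.{0}) : Cardinal.{0} :=
  haveI := Classical.propDecidable (θ < κ ∨ Order.IsSuccLimit κ)
  if θ < κ ∨ Order.IsSuccLimit κ then θ else sSup {ν | Order.succ ν = κ}

/-- `cof(K)`: the least number of generators of `K`. -/
noncomputable def cofIdeal (K : Set (Set (Set Ordinal.{0}))) : Cardinal.{1} :=
  sInf {c | ∃ S ⊆ K, #↥S = c ∧ ∀ B ∈ K, ∃ C ∈ S, B ⊆ C}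

/-- The dominating number `𝔡^μ_{κ,l}`. -/
noncomputable def dNum (κ : Cardinal.{0}) (l : Ordinal.{0}) (μ : Cardinal.{1}) : Cardinal.{1} :=
  sInf {c | ∃ F : Set (μ.ord.ToType → Set Ordinal.{0}),
    #↥F = c ∧ (∀ f ∈ F, ∀ i, f i ∈ PSet κ l) ∧
    ∀ g : μ.ord.ToType → Set Ordinal.{0}, (∀ i, g i ∈ PSet κ l) →
      ∃ f ∈ F, ∀ i, g i ⊆ f i}

/-- `u(ρ,μ)`: the least cardinality of a cofinal subset of `(P_ρ(μ), ⊆)`. -/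
noncomputable def uNum (ρ μ : Cardinal.{0}) : Cardinal.{1} :=
  sInf {c | ∃ X ⊆ PSet ρ μ.ord, #↥X = c ∧ ∀ e ∈ PSet ρ μ.ord, ∃ x ∈ X, e ⊆ x}

/-- `cov(lam, ν, ν, 2)`: the least cardinality of an `X ⊆ P_ν(lam)` such that every
member of `P_ν(lam)` is contained in a member of `X`. -/
noncomputable def covNum (lam ν : Cardinal.{0}) : Cardinal.{1} :=
  sInf {c | ∃ X ⊆ PSet ν lam.ord, #↥X = c ∧ ∀ e ∈ PSet ν lam.ord, ∃ x ∈ X, e ⊆ x}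

/-- `C` is closed unbounded in `l`. -/
def IsClubIn (C : Set Ordinal.{0}) (l : Ordinal.{0}) : Prop :=
  C ⊆ Set.Iio l ∧ (∀ p < l, ∃ q ∈ C, p < q) ∧
    (∀ o < l, Order.IsSuccLimit o → (∀ p < o, ∃ q ∈ C, p < q ∧ q < o) → o ∈ C)

/-- `κ` is a Mahlo cardinal: the set of regular cardinals below `κ` is stationary in `κ`. -/
def IsMahlo (κ : Cardinal.{0}) : Prop :=
  ∀ C : Set Ordinal.{0}, IsClubIn C κ.ord →
    ∃ o ∈ C, ∃ ρ : Cardinal.{0}, ρ.IsRegular ∧ ρ.ord = o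

variable {κ σ : Cardinal.{0}} {l γ : Ordinal.{0}}

lemma psub {a b : Set Ordinal.{0}} (hb : b ∈ PSet κ l) (h : a ⊆ b) : a ∈ PSet κ l :=
  ⟨h.trans hb.1, (mk_le_mk_of_subset h).trans_lt hb.2⟩

lemma pempty (h : 0 < κ) : (∅ : Set Ordinal.{0}) ∈ PSet κ l := by
  refine ⟨empty_subset _, ?_⟩
  rw [mk_emptyCollection]
  simpa using h

lemma psingle {o : Ordinal.{0}} (h0 : o < l) (h1 : 1 < Cardinal.lift.{1} κ) :
    ({o} : Set Ordinal.{0}) ∈ PSet κ l := by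
  refine ⟨by simpa using h0, ?_⟩
  rw [mk_singleton]; exact h1

lemma punion {a b : Set Ordinal.{0}} (hk : ℵ₀ ≤ κ) (ha : a ∈ PSet κ l) (hb : b ∈ PSet κ l) :
    a ∪ b ∈ PSet κ l := by
  refine ⟨union_subset ha.1 hb.1, (mk_union_le a b).trans_lt ?_⟩
  exact Cardinal.add_lt_of_lt (by simpa using hk) ha.2 hb.2

lemma regular_lift (h : κ.IsRegular) : (Cardinal.lift.{1} κ).IsRegular := by
  constructor
  · rw [aleph0_le_lift]; exact h.1
  · rw [← Cardinal.lift_ord, ← Ordinal.lift_cof, lift_le]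
    exact h.2

lemma psUnion (hk : κ.IsRegular) {S : Set (Set Ordinal.{0})} (hS : #↥S < Cardinal.lift.{1} κ)
    (h : ∀ s ∈ S, s ∈ PSet κ l) : ⋃₀ S ∈ PSet κ l := by
  refine ⟨sUnion_subset fun s hs => (h s hs).1, (mk_sUnion_le S).trans_lt ?_⟩
  refine Cardinal.mul_lt_of_lt (by rw [aleph0_le_lift]; exact hk.1) hS ?_
  refine Cardinal.iSup_lt_of_isRegular (regular_lift hk) hS fun s => (h s s.2).2

lemma iklW {B : Set (Set Ordinal.{0})} {w : Set Ordinal.{0}} (hB : B ⊆ PSet κ l)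
    (hw : w ∈ PSet κ l) (h : ∀ b ∈ B, ¬ w ⊆ b) : B ∈ Ikl κ l := ⟨hB, w, hw, h⟩

lemma ikl_mono {B C : Set (Set Ordinal.{0})} (h : B ∈ Ikl κ l) (hC : C ⊆ B) : C ∈ Ikl κ l := by
  obtain ⟨h1, w, hw, h2⟩ := h
  exact ⟨hC.trans h1, w, hw, fun b hb => h2 b (hC hb)⟩

lemma ikl_empty (h : 0 < κ) : (∅ : Set (Set Ordinal.{0})) ∈ Ikl κ l :=
  ⟨empty_subset _, ∅, pempty h, fun b hb => absurd hb (notMem_empty b)⟩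

lemma ikl_navoid {w : Set Ordinal.{0}} (hw : w ∈ PSet κ l) :
    {a | a ∈ PSet κ l ∧ ¬ w ⊆ a} ∈ Ikl κ l :=
  ⟨fun a ha => ha.1, w, hw, fun b hb => hb.2⟩

lemma IsIdeal.union2 {K : Set (Set (Set Ordinal.{0}))} (hI : IsIdeal κ l K) (hk : ℵ₀ ≤ κ)
    {B C : Set (Set Ordinal.{0})} (hB : B ∈ K) (hC : C ∈ K) : B ∪ C ∈ K := by
  have h2 : ({B, C} : Set (Set (Set Ordinal.{0}))) ⊆ K := by
    intro X hX
    rcases hX with rfl | hX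
    · exact hB
    · rw [mem_singleton_iff] at hX; subst hX; exact hC
  have h3 : #↥({B, C} : Set (Set (Set Ordinal.{0}))) < Cardinal.lift.{1} κ := by
    have : #↥({B, C} : Set (Set (Set Ordinal.{0}))) ≤ 2 := by
      refine le_trans mk_insert_le ?_
      rw [mk_singleton]
      norm_num
    have h5 : (ℵ₀ : Cardinal.{1}) ≤ Cardinal.lift.{1} κ := aleph0_le_lift.2 hk
    have h4 : (2 : Cardinal.{1}) < Cardinal.lift.{1} κ :=
      lt_of_lt_of_le (by exact_mod_cast Cardinal.nat_lt_aleph0 2) h5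
    exact lt_of_le_of_lt this h4
  rw [show B ∪ C = ⋃₀ {B, C} from (sUnion_pair B C).symm]
  exact hI.sUnion_mem _ h2 ⟨B, by simp⟩ h3

lemma mem_of_nabla {J : Set (Set (Set Ordinal.{0}))} {B : Set (Set Ordinal.{0})} (hno : IsNormal κ l σ γ J)
    (F : Set Ordinal.{0} → Set (Set Ordinal.{0})) (hF : ∀ e ∈ PSet σ γ, F e ∈ J)
    (hcov : B ⊆ {a | a ∈ PSet κ l ∧ a ∩ Set.Iio σ.ord = ∅} ∪
      ⋃ e ∈ PSet σ γ, {a | a ∈ F e ∧ inP σ γ a e}) : B ∈ J := by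
  rw [hno]; exact ⟨F, hF, hcov⟩

lemma inP_mem {a e : Set Ordinal.{0}} (h : inP σ γ a e) : e ∈ PSet σ γ := by
  refine ⟨h.1.trans inter_subset_right, lt_of_lt_of_le h.2 ?_⟩
  calc #↥(a ∩ Set.Iio σ.ord) ≤ #↥(Set.Iio σ.ord) := mk_le_mk_of_subset inter_subset_right
  _ = Cardinal.lift.{1} σ := by rw [Ordinal.mk_Iio_ordinal, Cardinal.card_ord]

lemma inP_empty {a : Set Ordinal.{0}} (hne : (a ∩ Set.Iio σ.ord).Nonempty) : inP σ γ a ∅ := by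
  refine ⟨empty_subset _, ?_⟩
  rw [mk_emptyCollection]
  exact (Cardinal.mk_ne_zero_iff.2 (nonempty_coe_sort.2 hne)).bot_lt

lemma empty_mem_psigma (hσ : 0 < σ) : (∅ : Set Ordinal.{0}) ∈ PSet σ γ := pempty hσ

lemma ideal_sub_nabla {J : Set (Set (Set Ordinal.{0}))} (hI : IsIdeal κ l J) (hσ : 0 < σ) :
    J ⊆ nabla κ l σ γ J := by
  intro B hB
  refine ⟨fun _ => B, fun _ _ => hB, fun a ha => ?_⟩
  by_cases h : a ∩ Set.Iio σ.ord = ∅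
  · exact Or.inl ⟨hI.mem_subset B hB ha, h⟩
  · refine Or.inr (mem_iUnion.2 ⟨∅, mem_iUnion.2 ⟨empty_mem_psigma hσ, ha, ?_⟩⟩)
    exact inP_empty (nonempty_iff_ne_empty.2 h)
/-- Closure sets determined by a variadic function `G`. -/
def CSet (κ : Cardinal.{0}) (l : Ordinal.{0}) (σ : Cardinal.{0}) (γ : Ordinal.{0})
    (G : List (Set Ordinal.{0}) → Set Ordinal.{0}) : Set (Set Ordinal.{0}) :=
  {a | a ∈ PSet κ l ∧ (a ∩ Set.Iio σ.ord).Nonempty ∧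
    ∀ es : List (Set Ordinal.{0}), (∀ e ∈ es, inP σ γ a e) → G es ⊆ a}

/-- Closure sets for tuples of length at most `n`. -/
def CnSet (κ : Cardinal.{0}) (l : Ordinal.{0}) (σ : Cardinal.{0}) (γ : Ordinal.{0})
    (G : List (Set Ordinal.{0}) → Set Ordinal.{0}) (n : ℕ) : Set (Set Ordinal.{0}) :=
  {a | a ∈ PSet κ l ∧ (a ∩ Set.Iio σ.ord).Nonempty ∧
    ∀ es : List (Set Ordinal.{0}), es.length ≤ n → (∀ e ∈ es, inP σ γ a e) → G es ⊆ a}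

lemma cn_mem {J : Set (Set (Set Ordinal.{0}))} (hI : IsIdeal κ l J)
    (hno : IsNormal κ l σ γ J) (hk : ℵ₀ ≤ κ) (hσ : 0 < σ) (n : ℕ) :
    ∀ G : List (Set Ordinal.{0}) → Set Ordinal.{0}, (∀ es, G es ∈ PSet κ l) →
      PSet κ l \ CnSet κ l σ γ G n ∈ J := by
  induction n with
  | zero =>
    intro G hG
    refine mem_of_nabla hno (fun _ => {a | a ∈ PSet κ l ∧ ¬ G [] ⊆ a})
      (fun e _ => hI.nonCofinal_subset (ikl_navoid (hG []))) ?_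
    rintro a ⟨haP, hnC⟩
    by_cases htr : a ∩ Set.Iio σ.ord = ∅
    · exact Or.inl ⟨haP, htr⟩
    · have hne : (a ∩ Set.Iio σ.ord).Nonempty := nonempty_iff_ne_empty.2 htr
      have hfail : ¬ G [] ⊆ a := by
        intro hg
        exact hnC ⟨haP, hne, fun es hlen _ => by
          rw [List.eq_nil_of_length_eq_zero (Nat.le_zero.mp hlen)]; exact hg⟩
      exact Or.inr (mem_iUnion.2 ⟨∅, mem_iUnion.2
        ⟨empty_mem_psigma hσ, ⟨haP, hfail⟩, inP_empty hne⟩⟩)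
  | succ n IH =>
    intro G hG
    refine mem_of_nabla hno (fun e =>
      (PSet κ l \ CnSet κ l σ γ (fun es => G (e :: es)) n) ∪ {a | a ∈ PSet κ l ∧ ¬ G [] ⊆ a})
      (fun e _ => hI.union2 hk (IH _ (fun es => hG (e :: es)))
        (hI.nonCofinal_subset (ikl_navoid (hG [])))) ?_
    rintro a ⟨haP, hnC⟩
    by_cases htr : a ∩ Set.Iio σ.ord = ∅
    · exact Or.inl ⟨haP, htr⟩
    have hne : (a ∩ Set.Iio σ.ord).Nonempty := nonempty_iff_ne_empty.2 htr
    have hfail : ∃ es : List (Set Ordinal.{0}), es.length ≤ n + 1 ∧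
        (∀ e ∈ es, inP σ γ a e) ∧ ¬ G es ⊆ a := by
      by_contra h
      push_neg at h
      exact hnC ⟨haP, hne, fun es h1 h2 => h es h1 h2⟩
    obtain ⟨es, hlen, hrel, hsub⟩ := hfail
    match es, hlen, hrel, hsub with
    | [], _, _, hsub =>
      exact Or.inr (mem_iUnion.2 ⟨∅, mem_iUnion.2
        ⟨empty_mem_psigma hσ, Or.inr ⟨haP, hsub⟩, inP_empty hne⟩⟩)
    | e :: es', hlen, hrel, hsub =>
      have he : inP σ γ a e := hrel e List.mem_cons_self
      have hnotC : a ∉ CnSet κ l σ γ (fun es => G (e :: es)) n := by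
        intro hC
        exact hsub (hC.2.2 es' (by simpa using Nat.succ_le_succ_iff.mp (by simpa using hlen))
          (fun e' he' => hrel e' (List.mem_cons_of_mem e he')))
      exact Or.inr (mem_iUnion.2 ⟨e, mem_iUnion.2
        ⟨inP_mem he, Or.inl ⟨haP, hnotC⟩, he⟩⟩)

lemma c_mem {J : Set (Set (Set Ordinal.{0}))} (hI : IsIdeal κ l J)
    (hno : IsNormal κ l σ γ J) (hk1 : ℵ₀ < κ) (hσ : 0 < σ)
    (G : List (Set Ordinal.{0}) → Set Ordinal.{0}) (hG : ∀ es, G es ∈ PSet κ l) :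
    PSet κ l \ CSet κ l σ γ G ∈ J := by
  have heq : PSet κ l \ CSet κ l σ γ G =
      ⋃₀ (Set.range fun n : ℕ => PSet κ l \ CnSet κ l σ γ G n) := by
    ext a
    constructor
    · rintro ⟨haP, hnC⟩
      by_cases htr : (a ∩ Set.Iio σ.ord).Nonempty
      · have hfail : ∃ es : List (Set Ordinal.{0}), (∀ e ∈ es, inP σ γ a e) ∧ ¬ G es ⊆ a := by
          by_contra h
          push_neg at h
          exact hnC ⟨haP, htr, fun es h2 => h es h2⟩
        obtain ⟨es, hrel, hsub⟩ := hfail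
        refine ⟨_, ⟨es.length, rfl⟩, haP, fun hC => hsub (hC.2.2 es le_rfl hrel)⟩
      · exact ⟨_, ⟨0, rfl⟩, haP, fun hC => htr hC.2.1⟩
    · rintro ⟨S, ⟨n, rfl⟩, haP, hnC⟩
      exact ⟨haP, fun hC => hnC ⟨hC.1, hC.2.1, fun es _ hrel => hC.2.2 es hrel⟩⟩
  rw [heq]
  refine hI.sUnion_mem _ ?_ ⟨_, ⟨0, rfl⟩⟩ ?_
  · rintro S ⟨n, rfl⟩
    exact cn_mem hI hno hk1.le hσ n G hG
  · have h1 := mk_range_le_lift (f := fun n : ℕ => PSet κ l \ CnSet κ l σ γ G n)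
    rw [Cardinal.lift_id', mk_nat, lift_aleph0] at h1
    refine lt_of_le_of_lt h1 ?_
    rw [← lift_aleph0.{1,0}]
    exact lift_lt.2 hk1
lemma CSet_anti {G G' : List (Set Ordinal.{0}) → Set Ordinal.{0}}
    (h : ∀ es, G es ⊆ G' es) : CSet κ l σ γ G' ⊆ CSet κ l σ γ G :=
  fun _ ⟨h1, h2, h3⟩ => ⟨h1, h2, fun es hrel => (h es).trans (h3 es hrel)⟩

/-- The explicit normal ideal generated by closure sets. -/
def Mid (κ : Cardinal.{0}) (l : Ordinal.{0}) (σ : Cardinal.{0}) (γ : Ordinal.{0}) :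
    Set (Set (Set Ordinal.{0})) :=
  {X | X ⊆ PSet κ l ∧ ∃ G : List (Set Ordinal.{0}) → Set Ordinal.{0},
    (∀ es, G es ∈ PSet κ l) ∧ X ∩ CSet κ l σ γ G ∈ Ikl κ l}

lemma Mid_isIdeal (hk : κ.IsRegular) (hk1 : ℵ₀ < κ) (hσ : 0 < σ)
    (hex : ∃ J, IsNormalIdeal κ l σ γ J) : IsIdeal κ l (Mid κ l σ γ) := by
  have hk0 : (0 : Cardinal.{0}) < κ := aleph0_pos.trans hk1
  constructor
  · exact fun X hX => hX.1
  · rintro B ⟨hB1, G, hG, hB2⟩ C hC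
    exact ⟨hC.trans hB1, G, hG, ikl_mono hB2 (inter_subset_inter_left _ hC)⟩
  · intro Y hY hne hYlt
    choose G hG hikl using fun B : ↥Y => (hY B.2).2
    choose w hw hwit using fun B : ↥Y => (hikl B).2
    have hsub : ⋃₀ Y ⊆ PSet κ l := sUnion_subset fun B hB => (hY hB).1
    set Gs : List (Set Ordinal.{0}) → Set Ordinal.{0} := fun es => ⋃ B : ↥Y, G B es with hGs
    have hGsP : ∀ es, Gs es ∈ PSet κ l := by
      intro es
      show (⋃ B : ↥Y, G B es) ∈ PSet κ l
      rw [← sUnion_range]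
      refine psUnion hk (lt_of_le_of_lt mk_range_le hYlt) ?_
      rintro s ⟨B, rfl⟩
      exact hG B es
    refine ⟨hsub, Gs, hGsP, ?_⟩
    have hWP : (⋃ B : ↥Y, w B) ∈ PSet κ l := by
      rw [← sUnion_range]
      refine psUnion hk (lt_of_le_of_lt mk_range_le hYlt) ?_
      rintro s ⟨B, rfl⟩
      exact hw B
    refine iklW (inter_subset_left.trans hsub) hWP ?_
    rintro b ⟨hb1, hb2⟩ hWb
    obtain ⟨B, hBY, hbB⟩ := hb1
    have hbC : b ∈ CSet κ l σ γ (G ⟨B, hBY⟩) :=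
      CSet_anti (fun es => subset_iUnion (fun B : ↥Y => G B es) ⟨B, hBY⟩) hb2
    exact hwit ⟨B, hBY⟩ b ⟨hbB, hbC⟩ ((subset_iUnion (fun B : ↥Y => w B) ⟨B, hBY⟩).trans hWb)
  · intro X hX
    exact ⟨hX.1, fun _ => ∅, fun _ => pempty hk0, ikl_mono hX inter_subset_left⟩
  · rintro ⟨_, G, hG, hikl⟩
    obtain ⟨J, hJI, hJN⟩ := hex
    have h1 : CSet κ l σ γ G ∈ Ikl κ l :=
      ikl_mono hikl (subset_inter (fun a ha => ha.1) (fun a ha => ha))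
    have h2 : PSet κ l \ CSet κ l σ γ G ∈ J := c_mem hJI hJN hk1 hσ G hG
    have h3 : (PSet κ l \ CSet κ l σ γ G) ∪ CSet κ l σ γ G ∈ J :=
      hJI.union2 hk.1 h2 (hJI.nonCofinal_subset h1)
    exact hJI.univ_not_mem (hJI.subset_mem _ h3 _ (fun a ha => by
      by_cases h : a ∈ CSet κ l σ γ G
      · exact Or.inr h
      · exact Or.inl ⟨ha, h⟩))

lemma Mid_isNormalIdeal (hk : κ.IsRegular) (hk1 : ℵ₀ < κ) (hσ : 0 < σ)
    (hex : ∃ J, IsNormalIdeal κ l σ γ J) : IsNormalIdeal κ l σ γ (Mid κ l σ γ) := by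
  have hI := Mid_isIdeal hk hk1 hσ hex
  refine ⟨hI, Set.Subset.antisymm (ideal_sub_nabla hI hσ) ?_⟩
  rintro X ⟨F, hF, hcov⟩
  classical
  have hXP : X ⊆ PSet κ l := by
    intro a ha
    rcases hcov ha with h | h
    · exact h.1
    · obtain ⟨_, ⟨e, rfl⟩, _, ⟨he, rfl⟩, ha2⟩ := h
      exact (hF e he).1 ha2.1
  choose Gf hGf hiklf using fun e : ↥(PSet σ γ) => (hF e e.2).2
  choose wf hwf hwitf using fun e : ↥(PSet σ γ) => (hiklf e).2
  set Gs : List (Set Ordinal.{0}) → Set Ordinal.{0} := fun es =>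
    match es with
    | [] => ∅
    | e :: es' => if h : e ∈ PSet σ γ then wf ⟨e, h⟩ ∪ Gf ⟨e, h⟩ es' else ∅
    with hGs
  have hGsP : ∀ es, Gs es ∈ PSet κ l := by
    rintro (_ | ⟨e, es'⟩)
    · exact pempty (aleph0_pos.trans hk1)
    · rw [hGs]
      dsimp only
      by_cases h : e ∈ PSet σ γ
      · rw [dif_pos h]
        exact punion hk.1 (hwf ⟨e, h⟩) (hGf ⟨e, h⟩ es')
      · rw [dif_neg h]
        exact pempty (aleph0_pos.trans hk1)
  refine ⟨hXP, Gs, hGsP, ?_⟩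
  have hempty : X ∩ CSet κ l σ γ Gs = ∅ := by
    rw [eq_empty_iff_forall_notMem]
    rintro a ⟨haX, haP, hne, hcl⟩
    rcases hcov haX with h | h
    · exact (nonempty_iff_ne_empty.1 hne) h.2
    obtain ⟨_, ⟨e, rfl⟩, _, ⟨he, rfl⟩, haF, hinP⟩ := h
    have hGse : ∀ es', Gs (e :: es') = wf ⟨e, he⟩ ∪ Gf ⟨e, he⟩ es' := by
      intro es'; rw [hGs]; exact dif_pos he
    have haC : a ∈ CSet κ l σ γ (Gf ⟨e, he⟩) := by
      refine ⟨haP, hne, fun es hrel => ?_⟩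
      refine subset_trans ?_ (hcl (e :: es) ?_)
      · rw [hGse es]; exact subset_union_right
      · intro e' he'
        rcases List.mem_cons.1 he' with rfl | he''
        · exact hinP
        · exact hrel e' he''
    have hwsub : wf ⟨e, he⟩ ⊆ a := by
      refine subset_trans ?_ (hcl [e] ?_)
      · rw [hGse []]; exact subset_union_left
      · intro e' he'
        rcases List.mem_cons.1 he' with rfl | he''
        · exact hinP
        · simp at he''
    exact hwitf ⟨e, he⟩ a ⟨haF, haC⟩ hwsub
  rw [hempty]
  exact ikl_empty (aleph0_pos.trans hk1)
lemma plittle (hk : ℵ₀ ≤ κ) {s : Set Ordinal.{0}} (hs : s ⊆ Set.Iio l)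
    (hfin : s.Finite) : s ∈ PSet κ l :=
  ⟨hs, lt_of_lt_of_le hfin.lt_aleph0 (aleph0_le_lift.2 hk)⟩

lemma normal_anti {J : Set (Set (Set Ordinal.{0}))} {σ' : Cardinal.{0}} {γ' : Ordinal.{0}}
    (hI : IsIdeal κ l J) (hno : IsNormal κ l σ' γ' J) (hk : ℵ₀ ≤ κ) (hσ : 0 < σ)
    (hσσ' : σ ≤ σ') (hγγ' : γ ≤ γ') (hl : 0 < l) : IsNormal κ l σ γ J := by
  classical
  have hσ' : (0 : Cardinal.{0}) < σ' := lt_of_lt_of_le hσ hσσ'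
  have h1κ : (1 : Cardinal.{1}) < Cardinal.lift.{1} κ := by
    refine lt_of_lt_of_le ?_ (aleph0_le_lift.2 hk)
    exact_mod_cast Cardinal.nat_lt_aleph0 1
  refine Set.Subset.antisymm (ideal_sub_nabla hI hσ) ?_
  rintro B ⟨F, hF, hcov⟩
  have hT : {a | a ∈ PSet κ l ∧ a ∩ Set.Iio σ.ord = ∅ ∧ (a ∩ Set.Iio σ'.ord).Nonempty}
      ∈ Ikl κ l := by
    refine iklW (fun a ha => ha.1) (psingle hl h1κ) ?_
    rintro b ⟨hb1, hb2, hb3⟩ h0b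
    have h0σ : (0 : Ordinal.{0}) < σ.ord := by
      have := Cardinal.ord_lt_ord.2 hσ
      rwa [Cardinal.ord_zero] at this
    have : (0 : Ordinal.{0}) ∈ b ∩ Set.Iio σ.ord := ⟨h0b rfl, h0σ⟩
    rw [hb2] at this
    exact this
  set T := {a | a ∈ PSet κ l ∧ a ∩ Set.Iio σ.ord = ∅ ∧ (a ∩ Set.Iio σ'.ord).Nonempty} with hTdef
  refine mem_of_nabla hno (fun e => (if e ∈ PSet σ γ then F e else ∅) ∪ T) ?_ ?_
  · intro e _
    refine hI.union2 hk ?_ (hI.nonCofinal_subset hT)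
    by_cases h : e ∈ PSet σ γ
    · rw [if_pos h]; exact hF e h
    · rw [if_neg h]; exact hI.nonCofinal_subset (ikl_empty (aleph0_pos.trans_le hk))
  · intro a haB
    rcases hcov haB with ⟨haP, htr⟩ | h
    · by_cases htr' : a ∩ Set.Iio σ'.ord = ∅
      · exact Or.inl ⟨haP, htr'⟩
      · have hne' : (a ∩ Set.Iio σ'.ord).Nonempty := nonempty_iff_ne_empty.2 htr'
        refine Or.inr (mem_iUnion.2 ⟨∅, mem_iUnion.2 ⟨empty_mem_psigma hσ', ?_, inP_empty hne'⟩⟩)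
        exact Or.inr ⟨haP, htr, hne'⟩
    · obtain ⟨_, ⟨e, rfl⟩, _, ⟨he, rfl⟩, haF, hinP⟩ := h
      have hIio : Set.Iio γ ⊆ Set.Iio γ' := fun x hx => lt_of_lt_of_le hx hγγ'
      have he' : e ∈ PSet σ' γ' :=
        ⟨he.1.trans hIio, lt_of_lt_of_le he.2 (lift_le.2 hσσ')⟩
      have hinP' : inP σ' γ' a e := by
        refine ⟨hinP.1.trans (inter_subset_inter_right _ hIio), lt_of_lt_of_le hinP.2 ?_⟩
        refine mk_le_mk_of_subset (inter_subset_inter_right _ ?_)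
        exact fun x hx => lt_of_lt_of_le hx (Cardinal.ord_le_ord.2 hσσ')
      refine Or.inr (mem_iUnion.2 ⟨e, mem_iUnion.2 ⟨he', ?_, hinP'⟩⟩)
      exact Or.inl (by rw [if_pos he]; exact haF)

lemma kappa_gt_aleph0 {θ' : Cardinal.{0}} {δ' : Ordinal.{0}} (hk : κ.IsRegular)
    (hθ'2 : 2 ≤ θ') (hκδ' : κ.ord ≤ δ') (hδ'l : δ' ≤ l)
    (hex' : ∃ J, IsNormalIdeal κ l θ' δ' J) : ℵ₀ < κ := by
  rcases lt_or_eq_of_le hk.1 with h | h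
  · exact h
  exfalso
  obtain ⟨J, hJI, hJN⟩ := hex'
  have hωδ' : Ordinal.omega0 ≤ δ' := by rw [← Cardinal.ord_aleph0, h]; exact hκδ'
  have hωl : Ordinal.omega0 ≤ l := hωδ'.trans hδ'l
  have hθ'0 : (0 : Cardinal.{0}) < θ' := lt_of_lt_of_le (by norm_num) hθ'2
  set G1 : List (Set Ordinal.{0}) → Set Ordinal.{0} := fun es =>
    {0, 1} ∪ ⋃ (o : Ordinal.{0}) (_ : es = [({o} : Set Ordinal.{0})] ∧ o < Ordinal.omega0), {o + 1}
    with hG1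
  have hval : ∀ es, G1 es ∈ PSet κ l := by
    intro es
    by_cases hcase : ∃ o : Ordinal.{0}, es = [({o} : Set Ordinal.{0})] ∧ o < Ordinal.omega0
    · obtain ⟨o, heq, ho⟩ := hcase
      have : G1 es = {0, 1, o + 1} := by
        rw [hG1]
        dsimp only
        have : (⋃ (o' : Ordinal.{0}) (_ : es = [({o'} : Set Ordinal.{0})] ∧ o' < Ordinal.omega0),
            ({o' + 1} : Set Ordinal.{0})) = {o + 1} := by
          apply Set.Subset.antisymm
          · rintro x hx
            obtain ⟨o', ho', hx⟩ := mem_iUnion₂.1 hx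
            have : o' = o := by
              have := ho'.1
              rw [heq] at this
              have h2 : ({o'} : Set Ordinal.{0}) = {o} := by
                injection this.symm
              exact singleton_eq_singleton_iff.1 h2
            rwa [this] at hx
          · intro x hx
            exact mem_iUnion₂.2 ⟨o, ⟨heq, ho⟩, hx⟩
        rw [this]
        ext x; simp [mem_insert_iff]; tauto
      rw [this]
      have honeω : o + 1 < Ordinal.omega0 := by
        obtain ⟨n, rfl⟩ := Ordinal.lt_omega0.1 ho
        have : ((n : Ordinal.{0}) + 1) = ((n + 1 : ℕ) : Ordinal.{0}) := by push_cast; ring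
        rw [this]
        exact Ordinal.nat_lt_omega0 (n + 1)
      refine plittle hk.1 ?_ ((Set.finite_singleton _).insert _ |>.insert _)
      intro x hx
      rcases hx with rfl | hx
      · exact lt_of_lt_of_le Ordinal.omega0_pos hωl
      · rcases hx with rfl | hx
        · exact lt_of_lt_of_le Ordinal.one_lt_omega0 hωl
        · rw [mem_singleton_iff] at hx; subst hx
          exact lt_of_lt_of_le honeω hωl
    · have : G1 es = {0, 1} := by
        rw [hG1]
        dsimp only
        have : (⋃ (o' : Ordinal.{0}) (_ : es = [({o'} : Set Ordinal.{0})] ∧ o' < Ordinal.omega0),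
            ({o' + 1} : Set Ordinal.{0})) = ∅ := by
          rw [eq_empty_iff_forall_notMem]
          intro x hx
          obtain ⟨o', ho', _⟩ := mem_iUnion₂.1 hx
          exact hcase ⟨o', ho'⟩
        rw [this, union_empty]
      rw [this]
      refine plittle hk.1 ?_ ((Set.finite_singleton _).insert _)
      intro x hx
      rcases hx with rfl | hx
      · exact lt_of_lt_of_le Ordinal.omega0_pos hωl
      · rw [mem_singleton_iff] at hx; subst hx
        exact lt_of_lt_of_le Ordinal.one_lt_omega0 hωl
  have hmem : PSet κ l \ CnSet κ l θ' δ' G1 1 ∈ J :=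
    cn_mem hJI hJN hk.1 hθ'0 1 G1 hval
  have hempty : CnSet κ l θ' δ' G1 1 = ∅ := by
    rw [eq_empty_iff_forall_notMem]
    rintro a ⟨haP, hne, hcl⟩
    have h01 : ({0, 1} : Set Ordinal.{0}) ⊆ a := by
      refine subset_trans ?_ (hcl [] (by norm_num) (by simp))
      rw [hG1]
      exact subset_union_left
    have hθ'ord : (1 : Ordinal.{0}) < θ'.ord := by
      have h2 : ((2 : ℕ) : Cardinal.{0}) ≤ θ' := by exact_mod_cast hθ'2
      have := Cardinal.ord_le_ord.2 h2
      rw [Cardinal.ord_nat] at this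
      refine lt_of_lt_of_le ?_ this
      exact_mod_cast Nat.lt_succ_self 1
    have htrace : (1 : Cardinal.{1}) < #↥(a ∩ Set.Iio θ'.ord) := by
      have hsub01 : ({0, 1} : Set Ordinal.{0}) ⊆ a ∩ Set.Iio θ'.ord := by
        intro x hx
        rcases hx with rfl | hx
        · exact ⟨h01 (by simp), lt_trans (zero_lt_one : (0 : Ordinal.{0}) < 1) hθ'ord⟩
        · rw [mem_singleton_iff] at hx; subst hx
          exact ⟨h01 (by simp), hθ'ord⟩
      have h2 : #↥({0, 1} : Set Ordinal.{0}) = 2 := by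
        rw [mk_insert (by simp : (0 : Ordinal.{0}) ∉ ({1} : Set Ordinal.{0})), mk_singleton]
        norm_num
      refine lt_of_lt_of_le ?_ (mk_le_mk_of_subset hsub01)
      rw [h2]; norm_num
    have hωa : ∀ n : ℕ, ((n : Ordinal.{0}) : Ordinal.{0}) ∈ a := by
      intro n
      induction n with
      | zero => exact h01 (by simp)
      | succ n ih =>
        have hn : (n : Ordinal.{0}) < Ordinal.omega0 := Ordinal.nat_lt_omega0 n
        have hrel : inP θ' δ' a {(n : Ordinal.{0})} := by
          refine ⟨?_, ?_⟩
          · intro x hx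
            rw [mem_singleton_iff] at hx; subst hx
            exact ⟨ih, lt_of_lt_of_le hn hωδ'⟩
          · rw [mk_singleton]; exact htrace
        have hstep := hcl [{(n : Ordinal.{0})}] (by norm_num)
          (by intro e he; simp at he; subst he; exact hrel)
        have hsucc : (n : Ordinal.{0}) + 1 ∈ G1 [{(n : Ordinal.{0})}] := by
          rw [hG1]
          refine Or.inr (mem_iUnion₂.2 ⟨(n : Ordinal.{0}), ⟨rfl, hn⟩, rfl⟩)
        have := hstep hsucc
        have hcast : ((n + 1 : ℕ) : Ordinal.{0}) = (n : Ordinal.{0}) + 1 := by push_cast; ring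
        rwa [hcast]
    have hinj : Function.Injective (fun n : ULift.{1} ℕ => (⟨((n.down : ℕ) : Ordinal.{0}), hωa n.down⟩ : ↥a)) := by
      intro m n hmn
      simp only [Subtype.mk_eq_mk] at hmn
      have : m.down = n.down := by exact_mod_cast hmn
      exact ULift.ext _ _ this
    have hle : ℵ₀ ≤ #↥a := by
      have := Cardinal.mk_le_of_injective hinj
      rwa [Cardinal.mk_uLift, mk_nat, lift_aleph0] at this
    have : #↥a < ℵ₀ := by
      have := haP.2
      rwa [← h, lift_aleph0] at this
    exact absurd hle (not_le.2 this)
  rw [hempty, diff_empty] at hmem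
  exact hJI.univ_not_mem hmem
lemma powerlt_base_mono {a b c : Cardinal.{0}} (h : a ≤ b) : a ^< c ≤ b ^< c :=
  powerlt_le.2 fun x hx => (power_le_power_right h).trans (le_powerlt b hx)

lemma self_le_powerlt {a b : Cardinal.{0}} (h : 1 < b) : a ≤ a ^< b := by
  have := le_powerlt a h
  rwa [power_one] at this

lemma le_two_powerlt {c : Cardinal.{0}} (hc : ℵ₀ ≤ c) : c ≤ 2 ^< c := by
  by_contra h
  push_neg at h
  exact absurd ((cantor ((2 : Cardinal.{0}) ^< c)).trans_le (le_powerlt 2 h)) (lt_irrefl _)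

lemma thetaBar_spec {κ θ : Cardinal.{0}} (hk : κ.IsRegular) (hθκ : θ ≤ κ) :
    (thetaBar κ θ = θ ∧ (θ < κ ∨ Order.IsSuccLimit κ)) ∨
    (θ = κ ∧ ∃ ν, κ = Order.succ ν ∧ thetaBar κ θ = ν ∧ ℵ₀ ≤ ν ∧ ν < κ) := by
  unfold thetaBar
  split_ifs with h
  · exact Or.inl ⟨rfl, h⟩
  · push_neg at h
    obtain ⟨hθ, hlim⟩ := h
    have hθeq : θ = κ := le_antisymm hθκ hθ
    rcases Order.not_isSuccLimit_iff.1 hlim with hmin | hpre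
    · exact absurd (hmin (zero_le : (0 : Cardinal.{0}) ≤ κ)) (not_le.2 (aleph0_pos.trans_le hk.1))
    · obtain ⟨ν, hcov⟩ := Order.not_isSuccPrelimit_iff_exists_covBy.1 hpre
      have hsucc : Order.succ ν = κ := hcov.succ_eq
      have huniq : {ν' : Cardinal.{0} | Order.succ ν' = κ} = {ν} := by
        ext ν'
        simp only [mem_setOf_eq, mem_singleton_iff]
        constructor
        · intro h'
          by_contra hne
          rcases lt_or_gt_of_ne hne with hlt | hlt
          · have := (Order.succ_le_of_lt hlt).trans_lt (Order.lt_succ ν)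
            rw [h', hsucc] at this
            exact lt_irrefl _ this
          · have := (Order.succ_le_of_lt hlt).trans_lt (Order.lt_succ ν')
            rw [h', hsucc] at this
            exact lt_irrefl _ this
        · rintro rfl; exact hsucc
      have hν0 : ℵ₀ ≤ ν := by
        by_contra hν
        push_neg at hν
        have h1 : Order.succ ν ≤ ℵ₀ := Order.succ_le_of_lt hν
        have h2 : κ = ℵ₀ := le_antisymm (hsucc ▸ h1) hk.1
        exact (Cardinal.isSuccLimit_aleph0.isSuccPrelimit) ν (h2 ▸ hcov)
      refine Or.inr ⟨hθeq, ν, hsucc.symm, ?_, hν0, ?_⟩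
      · rw [huniq]; exact csSup_singleton ν
      · rw [← hsucc]; exact Order.lt_succ ν

lemma thetaBar_two {κ θ : Cardinal.{0}} (hk : κ.IsRegular) (hθ2 : 2 ≤ θ) (hθκ : θ ≤ κ) :
    2 ≤ thetaBar κ θ := by
  rcases thetaBar_spec hk hθκ with ⟨h, _⟩ | ⟨_, ν, _, h, hν0, _⟩
  · rw [h]; exact hθ2
  · rw [h]; exact le_trans (le_of_lt (by exact_mod_cast Cardinal.nat_lt_aleph0 2)) hν0

lemma thetaBar_le {κ θ : Cardinal.{0}} (hk : κ.IsRegular) (hθκ : θ ≤ κ) :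
    thetaBar κ θ ≤ κ := by
  rcases thetaBar_spec hk hθκ with ⟨h, _⟩ | ⟨_, ν, _, h, _, hνκ⟩
  · rw [h]; exact hθκ
  · rw [h]; exact hνκ.le

lemma inP_size {θ : Cardinal.{0}} {δ : Ordinal.{0}} (hk : κ.IsRegular)
    (hθκ : θ ≤ κ) {a e : Set Ordinal.{0}} (ha : a ∈ PSet κ l) (h : inP θ δ a e) :
    #↥e < Cardinal.lift.{1} (thetaBar κ θ) := by
  rcases thetaBar_spec hk hθκ with ⟨heq, _⟩ | ⟨hθeq, ν, hκν, heq, hν0, hνκ⟩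
  · rw [heq]
    rcases lt_or_eq_of_le hθκ with hlt | rfl
    · calc #↥e < #↥(a ∩ Set.Iio θ.ord) := h.2
        _ ≤ #↥(Set.Iio θ.ord) := mk_le_mk_of_subset inter_subset_right
        _ = Cardinal.lift.{1} θ := by rw [Ordinal.mk_Iio_ordinal, Cardinal.card_ord]
    · calc #↥e < #↥(a ∩ Set.Iio θ.ord) := h.2
        _ ≤ #↥a := mk_le_mk_of_subset inter_subset_left
        _ < Cardinal.lift.{1} θ := ha.2
  · rw [heq]
    have h1 : #↥(a ∩ Set.Iio θ.ord) ≤ Cardinal.lift.{1} ν := by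
      rw [← Order.lt_succ_iff, ← Cardinal.lift_succ, ← hκν]
      exact lt_of_le_of_lt (mk_le_mk_of_subset inter_subset_left) ha.2
    exact lt_of_lt_of_le h.2 h1

lemma mk_Iio_card_set {β : Ordinal.{0}} : #↥(Set.Iio β) = Cardinal.lift.{1} β.card :=
  Ordinal.mk_Iio_ordinal β

lemma mk_level_le {β : Ordinal.{0}} {τ : Cardinal.{0}} (hβ : ℵ₀ ≤ β.card) :
    #↥{x : Set Ordinal.{0} | x ⊆ Set.Iio β ∧ #↥x ≤ Cardinal.lift.{1} τ} ≤
      Cardinal.lift.{1} (β.card ^ τ) := by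
  have h1 : #↥{x : Set Ordinal.{0} | x ⊆ Set.Iio β ∧ #↥x ≤ Cardinal.lift.{1} τ} ≤
      max #↥(Set.Iio β) ℵ₀ ^ Cardinal.lift.{1} τ := mk_bounded_subset_le _ _
  rw [mk_Iio_card_set] at h1
  have h2 : max (Cardinal.lift.{1} β.card) ℵ₀ = Cardinal.lift.{1} β.card := by
    rw [max_eq_left]
    rw [← lift_aleph0.{1,0}]
    exact lift_le.2 hβ
  rw [h2] at h1
  rw [lift_power]
  exact h1

lemma mk_small_subsets_le {β : Ordinal.{0}} {ϑ : Cardinal.{0}} (hβ : ℵ₀ ≤ β.card)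
    (hϑ : 0 < ϑ) :
    #↥{x : Set Ordinal.{0} | x ⊆ Set.Iio β ∧ #↥x < Cardinal.lift.{1} ϑ} ≤
      Cardinal.lift.{1} (ϑ * (β.card ^< ϑ)) := by
  classical
  set S := {x : Set Ordinal.{0} | x ⊆ Set.Iio β ∧ #↥x < Cardinal.lift.{1} ϑ} with hS
  set T := fun τ : ↥(Set.Iio ϑ) =>
    {x : Set Ordinal.{0} | x ⊆ Set.Iio β ∧ #↥x ≤ Cardinal.lift.{1} τ.1} with hT
  have hsub : S ⊆ ⋃ τ : ↥(Set.Iio ϑ), T τ := by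
    rintro x ⟨hx1, hx2⟩
    obtain ⟨τ, hτ, hlift⟩ := Cardinal.lt_lift_iff.1 hx2
    exact mem_iUnion.2 ⟨⟨τ, hτ⟩, hx1, le_of_eq hlift.symm⟩
  have h1 : #↥S ≤ #↥(⋃ τ : ↥(Set.Iio ϑ), T τ) := mk_le_mk_of_subset hsub
  have h2 : #↥(⋃ τ : ↥(Set.Iio ϑ), T τ) ≤ #↥(Set.Iio ϑ) * ⨆ τ : ↥(Set.Iio ϑ), #↥(T τ) :=
    Cardinal.mk_iUnion_le _
  have h3 : #↥(Set.Iio ϑ) ≤ Cardinal.lift.{1} ϑ := by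
    have hmap : Function.Injective (fun τ : ↥(Set.Iio ϑ) =>
        (⟨τ.1.ord, Cardinal.ord_lt_ord.2 τ.2⟩ : ↥(Set.Iio ϑ.ord))) := by
      intro τ τ' h
      apply Subtype.ext
      exact Cardinal.ord_injective (congrArg Subtype.val h)
    have := Cardinal.mk_le_of_injective hmap
    rwa [mk_Iio_card_set, Cardinal.card_ord] at this
  have h4 : (⨆ τ : ↥(Set.Iio ϑ), #↥(T τ)) ≤ Cardinal.lift.{1} (β.card ^< ϑ) := by
    refine ciSup_le' fun τ => ?_
    refine (mk_level_le hβ).trans ?_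
    exact lift_le.2 (le_powerlt β.card τ.2)
  calc #↥S ≤ #↥(Set.Iio ϑ) * ⨆ τ : ↥(Set.Iio ϑ), #↥(T τ) := h1.trans h2
    _ ≤ Cardinal.lift.{1} ϑ * Cardinal.lift.{1} (β.card ^< ϑ) :=
        mul_le_mul' h3 h4
    _ = Cardinal.lift.{1} (ϑ * (β.card ^< ϑ)) := (lift_mul _ _).symm

lemma mk_small_subsets_fin {β : Ordinal.{0}} {P : Set Ordinal.{0} → Prop}
    (hβ : β.card < ℵ₀) :
    #↥{x : Set Ordinal.{0} | x ⊆ Set.Iio β ∧ P x} < ℵ₀ := by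
  set F : ↥{x : Set Ordinal.{0} | x ⊆ Set.Iio β ∧ P x} → Set ↥(Set.Iio β) :=
    fun x => (fun s : ↥(Set.Iio β) => s.1) ⁻¹' x.1 with hF
  have key : ∀ x : ↥{x : Set Ordinal.{0} | x ⊆ Set.Iio β ∧ P x},
      (fun s : ↥(Set.Iio β) => s.1) '' F x = x.1 := by
    intro x
    rw [hF]
    have := Subtype.image_preimage_coe (Set.Iio β) x.1
    simp only at this ⊢
    rw [this]
    exact inter_eq_self_of_subset_right x.2.1
  have hinj : Function.Injective F := by
    intro x y hxy
    apply Subtype.ext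
    rw [← key x, ← key y, hxy]
  have h1 := Cardinal.mk_le_of_injective hinj
  rw [mk_set, mk_Iio_card_set] at h1
  refine lt_of_le_of_lt h1 (power_lt_aleph0 (by exact_mod_cast Cardinal.nat_lt_aleph0 2) ?_)
  rw [← lift_aleph0.{1,0}]
  exact lift_lt.2 hβ
lemma thetaBar_le_self {θ : Cardinal.{0}} (hk : κ.IsRegular) (hθκ : θ ≤ κ) :
    thetaBar κ θ ≤ θ := by
  rcases thetaBar_spec hk hθκ with ⟨h, _⟩ | ⟨hθeq, ν, _, h, _, hνκ⟩
  · rw [h]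
  · rw [h, hθeq]; exact hνκ.le

lemma succ_lt_kappa_of_lt_thetaBar {θ τ : Cardinal.{0}} (hk : κ.IsRegular) (hθκ : θ ≤ κ)
    (hτ : τ < thetaBar κ θ) : Order.succ τ < κ := by
  rcases thetaBar_spec hk hθκ with ⟨h, hor⟩ | ⟨hθeq, ν, _, h, _, hνκ⟩
  · rw [h] at hτ
    rcases hor with hlt | hlim
    · exact lt_of_le_of_lt (Order.succ_le_of_lt hτ) hlt
    · exact hlim.succ_lt (lt_of_lt_of_le hτ hθκ)
  · rw [h] at hτ
    exact lt_of_le_of_lt (Order.succ_le_of_lt hτ) hνκ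

lemma mk_level_ge {β : Ordinal.{0}} {τ : Cardinal.{0}} (hβ : ℵ₀ ≤ β.card) (hτβ : τ ≤ β.card) :
    Cardinal.lift.{1} (β.card ^ τ) ≤
      #↥{x : Set Ordinal.{0} | x ⊆ Set.Iio β ∧ #↥x ≤ Cardinal.lift.{1} τ} := by
  rcases eq_or_ne τ 0 with rfl | hτ0
  · rw [power_zero, lift_one]
    rw [Cardinal.one_le_iff_ne_zero, Cardinal.mk_ne_zero_iff]
    exact ⟨⟨∅, empty_subset _, by rw [mk_emptyCollection]; exact zero_le⟩⟩
  have hcard : #(↥(Set.Iio β) × ULift.{1} τ.out) = #↥(Set.Iio β) := by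
    rw [mk_prod, mk_uLift, mk_out, mk_Iio_card_set, Cardinal.lift_id, Cardinal.lift_id,
      ← lift_mul]
    exact congrArg _ (Cardinal.mul_eq_left hβ hτβ hτ0)
  obtain ⟨e2⟩ := Cardinal.eq.1 hcard.symm
  set R : (ULift.{1} τ.out → ↥(Set.Iio β)) → Set (↥(Set.Iio β) × ULift.{1} τ.out) :=
    fun f => Set.range fun i : ULift.{1} τ.out => (f i, i) with hR
  set img : (ULift.{1} τ.out → ↥(Set.Iio β)) → Set Ordinal.{0} :=
    fun f => (fun s : ↥(Set.Iio β) => s.1) '' (e2 ⁻¹' R f) with himg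
  have hprop : ∀ f, img f ⊆ Set.Iio β ∧ #↥(img f) ≤ Cardinal.lift.{1} τ := by
    intro f
    constructor
    · rintro y ⟨s, _, rfl⟩
      exact s.2
    · calc #↥(img f) ≤ #↥(e2 ⁻¹' R f) := mk_image_le
        _ = #↥(e2.symm '' R f) := by rw [Equiv.image_symm_eq_preimage]
        _ ≤ #↥(R f) := mk_image_le
        _ ≤ #(ULift.{1} τ.out) := mk_range_le
        _ = Cardinal.lift.{1} τ := by rw [mk_uLift, mk_out]
  have hinj : Function.Injective (fun f : ULift.{1} τ.out → ↥(Set.Iio β) =>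
      (⟨img f, (hprop f).1, (hprop f).2⟩ :
        ↥{x : Set Ordinal.{0} | x ⊆ Set.Iio β ∧ #↥x ≤ Cardinal.lift.{1} τ})) := by
    intro f g hfg
    have h0 : img f = img g := congrArg Subtype.val hfg
    have h1 : e2 ⁻¹' R f = e2 ⁻¹' R g := by
      refine Set.image_injective.2 ?_ h0
      exact Subtype.val_injective
    have h2 : R f = R g := by
      have := congrArg (fun S => e2 '' S) h1
      simpa only [Set.image_preimage_eq _ e2.surjective] using this
    funext i
    have hmem : (f i, i) ∈ R g := h2 ▸ Set.mem_range_self (f := fun i => (f i, i)) i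
    obtain ⟨j, hj⟩ := hmem
    have hji : j = i := congrArg Prod.snd hj
    subst hji
    exact (congrArg Prod.fst hj).symm
  have h1 := Cardinal.mk_le_of_injective hinj
  have h2 : #(ULift.{1} τ.out → ↥(Set.Iio β)) = Cardinal.lift.{1} (β.card ^ τ) := by
    rw [← Cardinal.power_def, mk_uLift, mk_out, mk_Iio_card_set, lift_power]
  rwa [h2] at h1
lemma mk_varUnion_le {G : List (Set Ordinal.{0}) → Set Ordinal.{0}}
    {E : Set (Set Ordinal.{0})} (hG : ∀ es, G es ∈ PSet κ l) (hE : E.Nonempty) :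
    #↥(⋃ (es : List (Set Ordinal.{0})) (_ : ∀ e ∈ es, e ∈ E), G es) ≤
      (max (#↥E) ℵ₀) * Cardinal.lift.{1} κ := by
  have hsub : (⋃ (es : List (Set Ordinal.{0})) (_ : ∀ e ∈ es, e ∈ E), G es) =
      ⋃ p : {es : List (Set Ordinal.{0}) // ∀ e ∈ es, e ∈ E}, G p.1 := by
    ext o
    simp only [mem_iUnion]
    constructor
    · rintro ⟨es, h, ho⟩; exact ⟨⟨es, h⟩, ho⟩
    · rintro ⟨⟨es, h⟩, ho⟩; exact ⟨es, h, ho⟩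
  rw [hsub]
  refine (Cardinal.mk_iUnion_le _).trans ?_
  refine mul_le_mul' ?_ (ciSup_le' fun p => (hG p.1).2.le)
  have hmap : Function.Injective (fun p : {es : List (Set Ordinal.{0}) // ∀ e ∈ es, e ∈ E} =>
      (p.1.pmap (fun e h => (⟨e, h⟩ : ↥E)) p.2 : List ↥E)) := by
    intro p q hpq
    apply Subtype.ext
    have := congrArg (List.map (fun e : ↥E => e.1)) hpq
    simpa [List.map_pmap, List.pmap_eq_map] using this
  refine (Cardinal.mk_le_of_injective hmap).trans ?_
  haveI : Nonempty ↥E := nonempty_coe_sort.2 hE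
  rw [Cardinal.mk_list_eq_max_mk_aleph0]

lemma mk_varUnion_lt (hk : κ.IsRegular) (hκℵ : ℵ₀ < κ)
    {G : List (Set Ordinal.{0}) → Set Ordinal.{0}} {E : Set (Set Ordinal.{0})}
    (hG : ∀ es, G es ∈ PSet κ l) (hE : E.Nonempty) (hEκ : #↥E < Cardinal.lift.{1} κ) :
    #↥(⋃ (es : List (Set Ordinal.{0})) (_ : ∀ e ∈ es, e ∈ E), G es) <
      Cardinal.lift.{1} κ := by
  have hsub : (⋃ (es : List (Set Ordinal.{0})) (_ : ∀ e ∈ es, e ∈ E), G es) =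
      ⋃ p : {es : List (Set Ordinal.{0}) // ∀ e ∈ es, e ∈ E}, G p.1 := by
    ext o
    simp only [mem_iUnion]
    constructor
    · rintro ⟨es, h, ho⟩; exact ⟨⟨es, h⟩, ho⟩
    · rintro ⟨⟨es, h⟩, ho⟩; exact ⟨es, h, ho⟩
  rw [hsub]
  have hLlt : #{es : List (Set Ordinal.{0}) // ∀ e ∈ es, e ∈ E} < Cardinal.lift.{1} κ := by
    have hmap : Function.Injective (fun p : {es : List (Set Ordinal.{0}) // ∀ e ∈ es, e ∈ E} =>
        (p.1.pmap (fun e h => (⟨e, h⟩ : ↥E)) p.2 : List ↥E)) := by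
      intro p q hpq
      apply Subtype.ext
      have := congrArg (List.map (fun e : ↥E => e.1)) hpq
      simpa [List.map_pmap, List.pmap_eq_map] using this
    refine lt_of_le_of_lt (Cardinal.mk_le_of_injective hmap) ?_
    haveI : Nonempty ↥E := nonempty_coe_sort.2 hE
    rw [Cardinal.mk_list_eq_max_mk_aleph0]
    refine max_lt hEκ ?_
    rw [← lift_aleph0.{1,0}]
    exact lift_lt.2 hκℵ
  refine lt_of_le_of_lt (Cardinal.mk_iUnion_le _) ?_
  refine Cardinal.mul_lt_of_lt (aleph0_le_lift.2 hk.1) hLlt ?_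
  exact Cardinal.iSup_lt_of_isRegular (regular_lift hk) hLlt fun p => (hG p.1).2

/-- Let `δ'` be an ordinal with `max(κ,δ) ≤ δ' ≤ λ` and `θ'` a cardinal with
`θ ≤ θ' ≤ κ`, and assume there exist a `[δ]^{<θ}`-normal ideal and a `[δ']^{<θ'}`-normal ideal
on `P_κ(λ)`. Assume `|δ|^{<θ̄} < |δ'|^{<θ̄'} < λ`. Then
`NS^{[δ']^{<θ'}}_{κ,λ} ≠ NS^{[δ]^{<θ}}_{κ,λ} | A` for every `A ∈ (NS^{[δ]^{<θ}}_{κ,λ})⁺`. -/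
theorem stmt17 (κ lam θ θ' : Cardinal.{0}) (δ δ' : Ordinal.{0})
    (hκ : κ.IsRegular) (hkl : κ ≤ lam) (hθ2 : 2 ≤ θ) (hθκ : θ ≤ κ)
    (hδ1 : 1 ≤ δ) (hdl : δ ≤ lam.ord)
    (hκδ' : κ.ord ≤ δ') (hδδ' : δ ≤ δ') (hdl2 : δ' ≤ lam.ord)
    (hθθ' : θ ≤ θ') (hθ'κ : θ' ≤ κ)
    (hex : ∃ J, IsNormalIdeal κ lam.ord θ δ J)
    (hex' : ∃ J, IsNormalIdeal κ lam.ord θ' δ' J)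
    (h1 : δ.card ^< thetaBar κ θ < δ'.card ^< thetaBar κ θ')
    (h2 : δ'.card ^< thetaBar κ θ' < lam) :
    ∀ N N', IsLeastNormalIdeal κ lam.ord θ δ N →
      IsLeastNormalIdeal κ lam.ord θ' δ' N' →
      ∀ A ∈ plus κ lam.ord N, N' ≠ restrict κ lam.ord N A := by
  intro N N' hN hN' A hA heq
  obtain ⟨⟨hNI, hNno⟩, hNle⟩ := hN
  obtain ⟨⟨hN'I, hN'no⟩, hN'le⟩ := hN'
  classical
  have hθ'2 : 2 ≤ θ' := hθ2.trans hθθ'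
  have hκℵ : ℵ₀ < κ := kappa_gt_aleph0 hκ hθ'2 hκδ' hdl2 hex'
  have hκ0 : (0 : Cardinal.{0}) < κ := aleph0_pos.trans hκℵ
  have hθ0 : (0 : Cardinal.{0}) < θ := lt_of_lt_of_le (by norm_num) hθ2
  have hθ'0 : (0 : Cardinal.{0}) < θ' := lt_of_lt_of_le (by norm_num) hθ'2
  have h1κ : (1 : Cardinal.{1}) < Cardinal.lift.{1} κ := by
    refine lt_of_lt_of_le ?_ (aleph0_le_lift.2 hκ.1)
    exact_mod_cast Cardinal.nat_lt_aleph0 1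
  have hℵκ : (ℵ₀ : Cardinal.{1}) < Cardinal.lift.{1} κ := by
    rw [← lift_aleph0.{1,0}]
    exact lift_lt.2 hκℵ
  have hδ'l : δ' ≤ lam.ord := hdl2
  have hκordpos : (0 : Ordinal.{0}) < κ.ord := by
    rw [← Cardinal.ord_zero]; exact Cardinal.ord_lt_ord.2 hκ0
  have hδ'pos : (0 : Ordinal.{0}) < δ' := lt_of_lt_of_le hκordpos hκδ'
  have hl0 : (0 : Ordinal.{0}) < lam.ord := lt_of_lt_of_le hδ'pos hδ'l
  have hθordpos : (0 : Ordinal.{0}) < θ.ord := by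
    rw [← Cardinal.ord_zero]; exact Cardinal.ord_lt_ord.2 hθ0
  have hθ'ordpos : (0 : Ordinal.{0}) < θ'.ord := by
    rw [← Cardinal.ord_zero]; exact Cardinal.ord_lt_ord.2 hθ'0
  have hθ'δ' : θ'.ord ≤ δ' := le_trans (Cardinal.ord_le_ord.2 hθ'κ) hκδ'
  -- Mid ideals
  obtain ⟨hMI, hMno⟩ := Mid_isNormalIdeal (l := lam.ord) (γ := δ) hκ hκℵ hθ0 hex
  obtain ⟨hM'I, hM'no⟩ := Mid_isNormalIdeal (l := lam.ord) (γ := δ') hκ hκℵ hθ'0 hex'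
  have hNM : N ⊆ Mid κ lam.ord θ δ := hNle _ ⟨hMI, hMno⟩
  have hN'M : N' ⊆ Mid κ lam.ord θ' δ' := hN'le _ ⟨hM'I, hM'no⟩
  have hM'noθδ : IsNormal κ lam.ord θ δ (Mid κ lam.ord θ' δ') :=
    normal_anti hM'I hM'no hκ.1 hθ0 hθθ' hδδ' hl0
  -- theta bar facts
  have htb2 : 2 ≤ thetaBar κ θ := thetaBar_two hκ hθ2 hθκ
  have htb'2 : 2 ≤ thetaBar κ θ' := thetaBar_two hκ hθ'2 hθ'κ
  have htb'1 : 1 < thetaBar κ θ' := lt_of_lt_of_le one_lt_two htb'2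
  have htb0 : (0 : Cardinal.{0}) < thetaBar κ θ := lt_of_lt_of_le (by norm_num) htb2
  have htb'0 : (0 : Cardinal.{0}) < thetaBar κ θ' := lt_of_lt_of_le (by norm_num) htb'2
  have htbκ : thetaBar κ θ ≤ κ := thetaBar_le hκ hθκ
  have htb'κ : thetaBar κ θ' ≤ κ := thetaBar_le hκ hθ'κ
  have hκδ'c : κ ≤ δ'.card := by
    have := Ordinal.card_le_card hκδ'
    rwa [Cardinal.card_ord] at this
  have hδ'ℵ : ℵ₀ ≤ δ'.card := hκ.1.trans hκδ'c
  set mu := δ'.card ^< thetaBar κ θ' with hmu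
  set mu0 := δ.card ^< thetaBar κ θ with hmu0
  have hκmu : κ ≤ mu := hκδ'c.trans (self_le_powerlt htb'1)
  have hmuℵ : ℵ₀ ≤ mu := hκ.1.trans hκmu
  -- Step A : certificate that a C'-cone is inside A
  have hPA : PSet κ lam.ord \ A ∈ N' := by
    rw [heq]
    refine ⟨diff_subset, ?_⟩
    have hempty : (PSet κ lam.ord \ A) ∩ A = ∅ := by
      ext b
      simp only [mem_inter_iff, mem_diff, mem_empty_iff_false, iff_false]
      tauto
    rw [hempty]
    exact hNI.nonCofinal_subset (ikl_empty hκ0)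
  obtain ⟨-, H₀, hH₀P, hH₀sub, c₀, hc₀P, hwit₀⟩ := hN'M hPA
  -- index sets
  set ES' : Set (Set Ordinal.{0}) :=
    {x | x ⊆ Set.Iio δ' ∧ #↥x < Cardinal.lift.{1} (thetaBar κ θ')} with hES'
  set ES : Set (Set Ordinal.{0}) :=
    {x | x ⊆ Set.Iio δ ∧ #↥x < Cardinal.lift.{1} (thetaBar κ θ)} with hES
  have hES'ne : ES'.Nonempty := ⟨∅, empty_subset _, by
    rw [mk_emptyCollection]
    exact Cardinal.zero_lt_lift_iff.2 htb'0⟩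
  have hESne : ES.Nonempty := ⟨∅, empty_subset _, by
    rw [mk_emptyCollection]
    exact Cardinal.zero_lt_lift_iff.2 htb0⟩
  set UH : Set Ordinal.{0} :=
    ⋃ (es : List (Set Ordinal.{0})) (_ : ∀ e ∈ es, e ∈ ES'), H₀ es with hUH
  set W : Set Ordinal.{0} := (Set.Iio δ' ∪ UH) ∪ c₀ with hW
  -- size bounds
  have hES'le : #↥ES' ≤ Cardinal.lift.{1} mu := by
    refine (mk_small_subsets_le hδ'ℵ htb'0).trans (lift_le.2 ?_)
    calc thetaBar κ θ' * (δ'.card ^< thetaBar κ θ') ≤ mu * mu :=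
          mul_le_mul' (htb'κ.trans hκmu) le_rfl
      _ = mu := Cardinal.mul_eq_self hmuℵ
  have hUHle : #↥UH ≤ Cardinal.lift.{1} mu := by
    refine (mk_varUnion_le hH₀P hES'ne).trans ?_
    have h3 : max (#↥ES') ℵ₀ ≤ Cardinal.lift.{1} mu :=
      max_le hES'le ((aleph0_le_lift.2 hmuℵ))
    calc max (#↥ES') ℵ₀ * Cardinal.lift.{1} κ ≤
          Cardinal.lift.{1} mu * Cardinal.lift.{1} mu :=
        mul_le_mul' h3 (lift_le.2 hκmu)
      _ = Cardinal.lift.{1} mu := by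
        rw [← lift_mul]
        exact congrArg _ (Cardinal.mul_eq_self hmuℵ)
  have hWle : #↥W ≤ Cardinal.lift.{1} mu := by
    have hmuℵ1 : (ℵ₀ : Cardinal.{1}) ≤ Cardinal.lift.{1} mu := aleph0_le_lift.2 hmuℵ
    have hIle : #↥(Set.Iio δ') ≤ Cardinal.lift.{1} mu := by
      rw [mk_Iio_card_set]
      exact lift_le.2 ((self_le_powerlt htb'1))
    have hc₀le : #↥c₀ ≤ Cardinal.lift.{1} mu := hc₀P.2.le.trans (lift_le.2 hκmu)
    rw [hW]
    refine (mk_union_le _ _).trans ?_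
    refine le_trans (add_le_add ((mk_union_le _ _).trans (add_le_add hIle hUHle)) hc₀le) ?_
    rw [Cardinal.add_eq_self hmuℵ1, Cardinal.add_eq_self hmuℵ1]
  have hFr : Cardinal.lift.{1} mu < #↥(Set.Iio lam.ord \ W) := by
    by_contra hcon
    push_neg at hcon
    have hcover : Set.Iio lam.ord ⊆ (Set.Iio lam.ord \ W) ∪ W := by
      intro o ho
      by_cases h : o ∈ W
      · exact Or.inr h
      · exact Or.inl ⟨ho, h⟩
    have hle := (mk_le_mk_of_subset hcover).trans (mk_union_le _ _)
    rw [mk_Iio_card_set, Cardinal.card_ord] at hle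
    have : Cardinal.lift.{1} lam ≤ Cardinal.lift.{1} mu := by
      refine hle.trans ?_
      refine le_trans (add_le_add hcon hWle) ?_
      rw [Cardinal.add_eq_self (aleph0_le_lift.2 hmuℵ)]
    exact absurd h2 (not_lt.2 (lift_le.1 this))
  have hemb : Nonempty (↥ES' ↪ ↥(Set.Iio lam.ord \ W)) :=
    Cardinal.le_def _ _ |>.1 (hES'le.trans hFr.le)
  obtain ⟨η⟩ := hemb
  -- the marker function
  set Hd : List (Set Ordinal.{0}) → Set Ordinal.{0} := fun es =>
    ⋃ (x : Set Ordinal.{0}) (h : es = [x] ∧ x ∈ ES'), {(η ⟨x, h.2⟩).1} with hHd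
  have hHdval : ∀ (x) (hx : x ∈ ES'), Hd [x] = {(η ⟨x, hx⟩).1} := by
    intro x hx
    rw [hHd]
    apply Set.Subset.antisymm
    · rintro o ho
      obtain ⟨x', h', ho⟩ := mem_iUnion₂.1 ho
      obtain ⟨hx'e, hx'⟩ := h'
      have hxx : x' = x := by
        injection hx'e with hh _
        exact hh.symm
      subst hxx
      exact ho
    · intro o ho
      exact mem_iUnion₂.2 ⟨x, ⟨rfl, hx⟩, ho⟩
  have hHdP : ∀ es, Hd es ∈ PSet κ lam.ord := by
    intro es
    by_cases hcase : ∃ x, es = [x] ∧ x ∈ ES'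
    · obtain ⟨x, hxe, hx⟩ := hcase
      subst hxe
      rw [hHdval x hx]
      exact psingle (η ⟨x, hx⟩).2.1 h1κ
    · have : Hd es = ∅ := by
        rw [hHd, eq_empty_iff_forall_notMem]
        intro o ho
        obtain ⟨x', h', _⟩ := mem_iUnion₂.1 ho
        exact hcase ⟨x', h'⟩
      rw [this]
      exact pempty hκ0
  -- the distinguishing set
  set Xd : Set (Set Ordinal.{0}) := PSet κ lam.ord \ CSet κ lam.ord θ' δ' Hd with hXd
  have hXdN' : Xd ∈ N' := c_mem hN'I hN'no hκℵ hθ'0 Hd hHdP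
  have hXdA : Xd ∩ A ∈ N := by
    rw [heq] at hXdN'
    exact hXdN'.2
  obtain ⟨-, G₀, hG₀P, hG₀sub, c, hcP, hwit⟩ := hNM hXdA
  set UG : Set Ordinal.{0} :=
    ⋃ (es : List (Set Ordinal.{0})) (_ : ∀ e ∈ es, e ∈ ES), G₀ es with hUG
  set Sbad : Set Ordinal.{0} := c ∪ UG with hSbad
  -- key cardinality bound
  have hSbadlt : #↥Sbad < Cardinal.lift.{1} mu := by
    rcases lt_or_eq_of_le hκmu with hlt | heqκμ
    · -- κ < mu
      set ρ : Cardinal.{0} := max κ mu0 with hρ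
      have hρℵ : ℵ₀ ≤ ρ := hκ.1.trans (le_max_left _ _)
      have hρμ : ρ < mu := max_lt hlt h1
      have hESle : #↥ES ≤ Cardinal.lift.{1} ρ := by
        by_cases hδfin : δ.card < ℵ₀
        · exact (mk_small_subsets_fin hδfin).le.trans (aleph0_le_lift.2 hρℵ)
        · push_neg at hδfin
          refine (mk_small_subsets_le hδfin htb0).trans (lift_le.2 ?_)
          calc thetaBar κ θ * mu0 ≤ ρ * ρ :=
                mul_le_mul' (htbκ.trans (le_max_left _ _)) (le_max_right _ _)
            _ = ρ := Cardinal.mul_eq_self hρℵ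
      have hUGle : #↥UG ≤ Cardinal.lift.{1} ρ := by
        refine (mk_varUnion_le hG₀P hESne).trans ?_
        calc max (#↥ES) ℵ₀ * Cardinal.lift.{1} κ ≤
              Cardinal.lift.{1} ρ * Cardinal.lift.{1} ρ :=
            mul_le_mul' (max_le hESle (aleph0_le_lift.2 hρℵ))
              (lift_le.2 (le_max_left _ _))
          _ = Cardinal.lift.{1} ρ := by
            rw [← lift_mul]
            exact congrArg _ (Cardinal.mul_eq_self hρℵ)
      have hfin1 : #↥Sbad ≤ Cardinal.lift.{1} ρ := by
        refine (mk_union_le _ _).trans ?_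
        refine le_trans (add_le_add (hcP.2.le.trans (lift_le.2 (le_max_left κ mu0))) hUGle) ?_
        rw [Cardinal.add_eq_self (aleph0_le_lift.2 hρℵ)]
      exact lt_of_le_of_lt hfin1 (lift_lt.2 hρμ)
    · -- κ = mu
      have hESlt : #↥ES < Cardinal.lift.{1} κ := by
        by_cases hδfin : δ.card < ℵ₀
        · exact lt_trans (mk_small_subsets_fin hδfin) hℵκ
        · push_neg at hδfin
          rcases lt_or_eq_of_le htbκ with htblt | htbeq
          · refine lt_of_le_of_lt (mk_small_subsets_le hδfin htb0) (lift_lt.2 ?_)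
            refine Cardinal.mul_lt_of_lt hκ.1 htblt ?_
            rw [← heqκμ] at h1
            exact h1
          · exfalso
            have h2δ : (2 : Cardinal.{0}) ≤ δ.card := le_trans (by
              exact_mod_cast (Cardinal.nat_lt_aleph0 2).le) hδfin
            have hκmu0 : κ ≤ mu0 := by
              rw [hmu0, htbeq]
              exact (le_two_powerlt hκ.1).trans (powerlt_base_mono h2δ)
            rw [← heqκμ] at h1
            exact absurd h1 (not_lt.2 hκmu0)
      have hUGlt : #↥UG < Cardinal.lift.{1} κ :=
        mk_varUnion_lt hκ hκℵ hG₀P hESne hESlt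
      refine lt_of_le_of_lt (mk_union_le _ _) ?_
      rw [← heqκμ]
      exact Cardinal.add_lt_of_lt (aleph0_le_lift.2 hκ.1) hcP.2 hUGlt
  -- extract the level τ₀
  obtain ⟨s₀, hs₀μ, hs₀eq⟩ := Cardinal.lt_lift_iff.1 hSbadlt
  have hτex : ∃ τ < thetaBar κ θ', s₀ < δ'.card ^ τ := by
    by_contra hcon
    push_neg at hcon
    exact absurd (powerlt_le.2 hcon) (not_le.2 hs₀μ)
  obtain ⟨τ₀, hτ₀tb, hτ₀⟩ := hτex
  have hSlt : #↥Sbad < Cardinal.lift.{1} (δ'.card ^ τ₀) := by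
    rw [← hs₀eq]
    exact lift_lt.2 hτ₀
  set XT : Set (Set Ordinal.{0}) :=
    {x | x ⊆ Set.Iio δ' ∧ #↥x ≤ Cardinal.lift.{1} τ₀} with hXT
  have hXTge : Cardinal.lift.{1} (δ'.card ^ τ₀) ≤ #↥XT :=
    mk_level_ge hδ'ℵ ((hτ₀tb.le.trans htb'κ).trans hκδ'c)
  -- the t-set
  set ts : Set Ordinal.{0} := Set.Iio ((Order.succ τ₀).ord) with hts
  have hsuccκ : Order.succ τ₀ < κ := succ_lt_kappa_of_lt_thetaBar hκ hθ'κ hτ₀tb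
  have hsuccθ' : (Order.succ τ₀).ord ≤ θ'.ord :=
    Cardinal.ord_le_ord.2 ((Order.succ_le_of_lt hτ₀tb).trans (thetaBar_le_self hκ hθ'κ))
  have hts_sub : ts ⊆ Set.Iio θ'.ord := fun z hz => lt_of_lt_of_le hz hsuccθ'
  have hts_subδ' : ts ⊆ Set.Iio δ' := fun z hz =>
    lt_of_lt_of_le (hts_sub hz) hθ'δ'
  have hts_mk : #↥ts = Cardinal.lift.{1} (Order.succ τ₀) := by
    rw [hts, mk_Iio_card_set, Cardinal.card_ord]
  have htsP : ts ∈ PSet κ lam.ord := by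
    refine ⟨fun z hz => lt_of_lt_of_le (hts_subδ' hz) hδ'l, ?_⟩
    rw [hts_mk]
    exact lift_lt.2 hsuccκ
  have hXE : ∀ x : ↥XT, x.1 ∈ ES' := fun x =>
    ⟨x.2.1, lt_of_le_of_lt x.2.2 (lift_lt.2 hτ₀tb)⟩
  -- the main marker claim
  have hmain : ∀ x : ↥XT, (η ⟨x.1, hXE x⟩).1 ∈ Sbad := by
    intro x
    obtain ⟨hxsub, hxle⟩ := x.2
    set y : Set Ordinal.{0} := (((c₀ ∪ c) ∪ ts) ∪ x.1) ∪ {0} with hy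
    have hc₀y : c₀ ⊆ y := fun z hz => Or.inl (Or.inl (Or.inl (Or.inl hz)))
    have hcy : c ⊆ y := fun z hz => Or.inl (Or.inl (Or.inl (Or.inr hz)))
    have htsy : ts ⊆ y := fun z hz => Or.inl (Or.inl (Or.inr hz))
    have hxy : x.1 ⊆ y := fun z hz => Or.inl (Or.inr hz)
    have h0y : (0 : Ordinal.{0}) ∈ y := Or.inr rfl
    have hxP : x.1 ∈ PSet κ lam.ord := by
      refine ⟨hxsub.trans (fun z hz => lt_of_lt_of_le hz hδ'l), ?_⟩
      exact lt_of_le_of_lt hxle (lift_lt.2 (lt_of_lt_of_le hτ₀tb htb'κ))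
    have hyP : y ∈ PSet κ lam.ord :=
      punion hκ.1 (punion hκ.1 (punion hκ.1 (punion hκ.1 hc₀P hcP) htsP) hxP)
        (psingle hl0 h1κ)
    set FAM : Set (Set Ordinal.{0}) := {b | b ∈ CSet κ lam.ord θ δ G₀ ∧
      b ∈ CSet κ lam.ord θ' δ' H₀ ∧ y ⊆ b} with hFAM
    have hFAMne : ∃ b, b ∈ FAM := by
      by_contra hno
      push_neg at hno
      set U : Set (Set Ordinal.{0}) := (PSet κ lam.ord \ CSet κ lam.ord θ δ G₀) ∪
        ((PSet κ lam.ord \ CSet κ lam.ord θ' δ' H₀) ∪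
          {b | b ∈ PSet κ lam.ord ∧ ¬ y ⊆ b}) with hU
      have hUM : U ∈ Mid κ lam.ord θ' δ' := by
        refine hM'I.union2 hκ.1 (c_mem hM'I hM'noθδ hκℵ hθ0 G₀ hG₀P) ?_
        exact hM'I.union2 hκ.1 (c_mem hM'I hM'no hκℵ hθ'0 H₀ hH₀P)
          (hM'I.nonCofinal_subset (ikl_navoid hyP))
      refine hM'I.univ_not_mem (hM'I.subset_mem U hUM _ ?_)
      intro b hbP
      by_cases h1b : b ∈ CSet κ lam.ord θ δ G₀
      · by_cases h2b : b ∈ CSet κ lam.ord θ' δ' H₀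
        · by_cases h3b : y ⊆ b
          · exact absurd ⟨h1b, h2b, h3b⟩ (hno b)
          · exact Or.inr (Or.inr ⟨hbP, h3b⟩)
        · exact Or.inr (Or.inl ⟨hbP, h2b⟩)
      · exact Or.inl ⟨hbP, h1b⟩
    obtain ⟨b0, hb0⟩ := hFAMne
    set ax : Set Ordinal.{0} := ⋂₀ FAM with hax
    have haxb0 : ax ⊆ b0 := sInter_subset_of_mem hb0
    have haxP : ax ∈ PSet κ lam.ord := psub hb0.1.1 haxb0
    have hyax : y ⊆ ax := subset_sInter fun b hb => hb.2.2
    have h0ax : (0 : Ordinal.{0}) ∈ ax := hyax h0y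
    have haxG : ax ∈ CSet κ lam.ord θ δ G₀ := by
      refine ⟨haxP, ⟨0, h0ax, hθordpos⟩, ?_⟩
      intro es hrel
      refine subset_sInter fun b hb => ?_
      refine hb.1.2.2 es fun e he => ?_
      have h := hrel e he
      exact ⟨h.1.trans (inter_subset_inter_left _ (sInter_subset_of_mem hb)),
        lt_of_lt_of_le h.2
          (mk_le_mk_of_subset (inter_subset_inter_left _ (sInter_subset_of_mem hb)))⟩
    have haxH : ax ∈ CSet κ lam.ord θ' δ' H₀ := by
      refine ⟨haxP, ⟨0, h0ax, hθ'ordpos⟩, ?_⟩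
      intro es hrel
      refine subset_sInter fun b hb => ?_
      refine hb.2.1.2.2 es fun e he => ?_
      have h := hrel e he
      exact ⟨h.1.trans (inter_subset_inter_left _ (sInter_subset_of_mem hb)),
        lt_of_lt_of_le h.2
          (mk_le_mk_of_subset (inter_subset_inter_left _ (sInter_subset_of_mem hb)))⟩
    have haxA : ax ∈ A := by
      by_contra hnA
      exact hwit₀ ax ⟨⟨haxP, hnA⟩, haxH⟩ (hc₀y.trans hyax)
    have haxCHd : ax ∈ CSet κ lam.ord θ' δ' Hd := by
      by_contra hnot
      exact hwit ax ⟨⟨⟨haxP, hnot⟩, haxA⟩, haxG⟩ (hcy.trans hyax)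
    have hxES := hXE x
    have hinPx : inP θ' δ' ax x.1 := by
      refine ⟨fun z hz => ⟨hyax (hxy hz), hxsub hz⟩, ?_⟩
      have hts_ax : ts ⊆ ax ∩ Set.Iio θ'.ord := fun z hz =>
        ⟨hyax (htsy hz), hts_sub hz⟩
      calc #↥x.1 ≤ Cardinal.lift.{1} τ₀ := hxle
        _ < Cardinal.lift.{1} (Order.succ τ₀) := lift_lt.2 (Order.lt_succ τ₀)
        _ = #↥ts := hts_mk.symm
        _ ≤ #↥(ax ∩ Set.Iio θ'.ord) := mk_le_mk_of_subset hts_ax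
    have hmx : (η ⟨x.1, hxES⟩).1 ∈ ax := by
      have hHdsub := haxCHd.2.2 [x.1] (by
        intro e he
        simp only [List.mem_singleton] at he
        subst he
        exact hinPx)
      refine hHdsub ?_
      rw [hHdval x.1 hxES]
      rfl
    have hcover : ax ⊆ y ∪ (UG ∪ UH) := by
      have hzFAM : ax ∩ (y ∪ (UG ∪ UH)) ∈ FAM := by
        refine ⟨⟨psub haxP inter_subset_left,
            ⟨0, ⟨h0ax, Or.inl h0y⟩, hθordpos⟩, ?_⟩,
          ⟨psub haxP inter_subset_left,
            ⟨0, ⟨h0ax, Or.inl h0y⟩, hθ'ordpos⟩, ?_⟩,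
          subset_inter hyax subset_union_left⟩
        · intro es hrel
          have hrel' : ∀ e ∈ es, inP θ δ ax e := by
            intro e he
            have h := hrel e he
            exact ⟨h.1.trans (inter_subset_inter_left _ inter_subset_left),
              lt_of_lt_of_le h.2
                (mk_le_mk_of_subset (inter_subset_inter_left _ inter_subset_left))⟩
          have hin : G₀ es ⊆ ax := haxG.2.2 es hrel'
          have hesES : ∀ e ∈ es, e ∈ ES := by
            intro e he
            have h := hrel' e he
            exact ⟨h.1.trans inter_subset_right, inP_size hκ hθκ haxP h⟩
          refine subset_inter hin fun o ho => Or.inr (Or.inl ?_)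
          exact mem_iUnion.2 ⟨es, mem_iUnion.2 ⟨hesES, ho⟩⟩
        · intro es hrel
          have hrel' : ∀ e ∈ es, inP θ' δ' ax e := by
            intro e he
            have h := hrel e he
            exact ⟨h.1.trans (inter_subset_inter_left _ inter_subset_left),
              lt_of_lt_of_le h.2
                (mk_le_mk_of_subset (inter_subset_inter_left _ inter_subset_left))⟩
          have hin : H₀ es ⊆ ax := haxH.2.2 es hrel'
          have hesES : ∀ e ∈ es, e ∈ ES' := by
            intro e he
            have h := hrel' e he
            exact ⟨h.1.trans inter_subset_right, inP_size hκ hθ'κ haxP h⟩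
          refine subset_inter hin fun o ho => Or.inr (Or.inr ?_)
          exact mem_iUnion.2 ⟨es, mem_iUnion.2 ⟨hesES, ho⟩⟩
      intro o ho
      exact (sInter_subset_of_mem hzFAM ho).2
    have hηnW : (η ⟨x.1, hxES⟩).1 ∉ W := (η ⟨x.1, hxES⟩).2.2
    rcases hcover hmx with hmy | hUGH
    · rcases hmy with ((((h | h) | h) | h) | h)
      · exact absurd (Or.inr h) hηnW
      · exact Or.inl h
      · exact absurd (Or.inl (Or.inl (hts_subδ' h))) hηnW
      · exact absurd (Or.inl (Or.inl (hxsub h))) hηnW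
      · rw [mem_singleton_iff] at h
        exact absurd (Or.inl (Or.inl (h ▸ hδ'pos))) hηnW
    · rcases hUGH with h | h
      · exact Or.inr h
      · exact absurd (Or.inl (Or.inr h)) hηnW
  -- final contradiction
  have hΨinj : Function.Injective (fun x : ↥XT =>
      (⟨(η ⟨x.1, hXE x⟩).1, hmain x⟩ : ↥Sbad)) := by
    intro x y hxy
    have h1 := congrArg Subtype.val hxy
    simp only at h1
    have h3 := η.injective (Subtype.ext h1)
    have h4 : x.1 = y.1 := congrArg (fun z : ↥ES' => z.1) h3
    exact Subtype.ext h4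
  have hle : #↥XT ≤ #↥Sbad := Cardinal.mk_le_of_injective hΨinj
  exact absurd (hXTge.trans hle) (not_le.2 hSlt)


end PklNormal
end

section
/- Let μ be a nonzero cardinal. Then (0) 𝔡^μ_{κ,λ} ≤ 𝔡^μ_{κ,ρ} · 𝔡^μ_{ρ⁺,λ} ≤ 𝔡^{μ·ρ}_{κ,λ} for every cardinal ρ with κ ≤ ρ < λ, and (1) 𝔡^μ_{κ,λ} ≤ 𝔡^μ_{κ,ρ} · 𝔡^μ_{ρ,λ} ≤ 𝔡^{μ·ρ}_{κ,λ} for every regular cardinal ρ with κ ≤ ρ ≤ λ. -/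
open Cardinal Set

namespace PklNormal

private lemma isRegular_lift {c : Cardinal.{0}} (h : c.IsRegular) :
    (Cardinal.lift.{1} c).IsRegular := by
  constructor
  · rw [Cardinal.aleph0_le_lift]; exact h.1
  · rw [← Cardinal.lift_ord, ← Ordinal.lift_cof]
    exact Cardinal.lift_le.2 h.2

private lemma dNum_spec (κ : Cardinal.{0}) (l : Ordinal.{0}) (ν : Cardinal.{1}) :
    ∃ F : Set (ν.ord.ToType → Set Ordinal.{0}),
      #↥F = dNum κ l ν ∧ (∀ f ∈ F, ∀ i, f i ∈ PSet κ l) ∧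
      ∀ g : ν.ord.ToType → Set Ordinal.{0}, (∀ i, g i ∈ PSet κ l) →
        ∃ f ∈ F, ∀ i, g i ⊆ f i := by
  have h := csInf_mem (s := {c | ∃ F : Set (ν.ord.ToType → Set Ordinal.{0}),
    #↥F = c ∧ (∀ f ∈ F, ∀ i, f i ∈ PSet κ l) ∧
    ∀ g : ν.ord.ToType → Set Ordinal.{0}, (∀ i, g i ∈ PSet κ l) →
      ∃ f ∈ F, ∀ i, g i ⊆ f i})
    ⟨_, {f | ∀ i, f i ∈ PSet κ l}, rfl, fun f hf => hf, fun g hg => ⟨g, hg, fun _ => subset_rfl⟩⟩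
  obtain ⟨F, hF, h1, h2⟩ := h
  exact ⟨F, hF, h1, h2⟩

private lemma dNum_le {κ : Cardinal.{0}} {l : Ordinal.{0}} {ν : Cardinal.{1}} {c : Cardinal.{1}}
    (F : Set (ν.ord.ToType → Set Ordinal.{0}))
    (hval : ∀ f ∈ F, ∀ i, f i ∈ PSet κ l)
    (hdom : ∀ g : ν.ord.ToType → Set Ordinal.{0}, (∀ i, g i ∈ PSet κ l) →
      ∃ f ∈ F, ∀ i, g i ⊆ f i)
    (hc : #↥F ≤ c) : dNum κ l ν ≤ c := by
  refine le_trans ?_ hc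
  unfold dNum
  exact csInf_le' ⟨F, rfl, hval, hdom⟩


private lemma lift_le_dNum {κ lam : Cardinal.{0}} {ν : Cardinal.{1}} (hκ : κ.IsRegular)
    (hkl : κ ≤ lam) (hν : ν ≠ 0) : Cardinal.lift.{1} κ ≤ dNum κ lam.ord ν := by
  have hℵ : ℵ₀ ≤ Cardinal.lift.{1} κ := Cardinal.aleph0_le_lift.2 hκ.1
  obtain ⟨F, hF, hval, hdom⟩ := dNum_spec κ lam.ord ν
  rw [← hF]
  by_contra hlt
  push_neg at hlt
  have hi : Nonempty ν.ord.ToType := by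
    rw [← Cardinal.mk_ne_zero_iff, Cardinal.mk_toType, Cardinal.card_ord]; exact hν
  obtain ⟨i₀⟩ := hi
  have hcover : Set.Iio lam.ord ⊆ ⋃ f : ↥F, f.1 i₀ := by
    intro ξ hξ
    obtain ⟨f, hfF, hf⟩ := hdom (fun _ => {ξ}) (fun _ =>
      ⟨Set.singleton_subset_iff.2 hξ, by
        rw [Cardinal.mk_singleton]; exact one_lt_aleph0.trans_le hℵ⟩)
    exact Set.mem_iUnion.2 ⟨⟨f, hfF⟩, hf i₀ rfl⟩
  have h1 : Cardinal.lift.{1} lam ≤ #↥(⋃ f : ↥F, f.1 i₀) := by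
    have := Cardinal.mk_le_mk_of_subset hcover
    rwa [Ordinal.mk_Iio_ordinal, Cardinal.card_ord] at this
  have h2 : #↥(⋃ f : ↥F, f.1 i₀) < Cardinal.lift.{1} κ :=
    Cardinal.mk_iUnion_le_sum_mk.trans_lt
      (Cardinal.sum_lt_of_isRegular (isRegular_lift hκ) hlt fun f => (hval f f.2 i₀).2)
  exact absurd ((Cardinal.lift_le.2 hkl).trans h1) (not_le.2 h2)

private lemma dNum_le_mul {κ ρ σ lam : Cardinal.{0}} {ν : Cardinal.{1}}
    (hκσ : κ ≤ σ) (hσ : σ ≤ Order.succ ρ) :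
    dNum κ lam.ord ν ≤ dNum κ ρ.ord ν * dNum σ lam.ord ν := by
  obtain ⟨F, hF, hFval, hFdom⟩ := dNum_spec κ ρ.ord ν
  obtain ⟨G, hG, hGval, hGdom⟩ := dNum_spec σ lam.ord ν
  have hemb : ∀ (g : ↥G) (i : ν.ord.ToType), Nonempty (↥(g.1 i) ↪ ↥(Set.Iio ρ.ord)) := by
    intro g i
    rw [← Cardinal.le_def]
    have h1 : #↥(g.1 i) < Cardinal.lift.{1} σ := (hGval g.1 g.2 i).2
    have h2 : #↥(g.1 i) ≤ Cardinal.lift.{1} ρ := by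
      have h3 := h1.trans_le (Cardinal.lift_le.2 hσ)
      rwa [Cardinal.lift_succ, Order.lt_succ_iff] at h3
    rwa [Ordinal.mk_Iio_ordinal, Cardinal.card_ord]
  let E : ∀ (g : ↥G) (i : ν.ord.ToType), ↥(g.1 i) ↪ ↥(Set.Iio ρ.ord) :=
    fun g i => (hemb g i).some
  let comb : ↥F × ↥G → ν.ord.ToType → Set Ordinal.{0} := fun fg i =>
    {x | ∃ hx : x ∈ fg.2.1 i, ((E fg.2 i ⟨x, hx⟩ : Ordinal)) ∈ fg.1.1 i}
  refine dNum_le (Set.range comb) ?_ ?_ ?_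
  · rintro f ⟨fg, rfl⟩ i
    constructor
    · intro x hx
      exact (hGval fg.2.1 fg.2.2 i).1 hx.choose
    · have hinj : Function.Injective
          (fun z : ↥(comb fg i) => (⟨(E fg.2 i ⟨z.1, z.2.choose⟩ : Ordinal),
            z.2.choose_spec⟩ : ↥(fg.1.1 i))) := by
        rintro a b hab
        have hv1 := congrArg Subtype.val hab
        have hv2 : (⟨a.1, a.2.choose⟩ : ↥(fg.2.1 i)) = ⟨b.1, b.2.choose⟩ :=
          (E fg.2 i).injective (Subtype.ext hv1)
        exact Subtype.ext (Subtype.mk_eq_mk.1 hv2)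
      exact (Cardinal.mk_le_of_injective hinj).trans_lt (hFval fg.1.1 fg.1.2 i).2
  · intro g0 hg0
    obtain ⟨g, hgG, hgdom⟩ := hGdom g0 (fun i =>
      ⟨(hg0 i).1, (hg0 i).2.trans_le (Cardinal.lift_le.2 hκσ)⟩)
    let gg : ↥G := ⟨g, hgG⟩
    let g1 : ν.ord.ToType → Set Ordinal.{0} := fun i =>
      {y | ∃ x, ∃ hx0 : x ∈ g0 i, y = (E gg i ⟨x, hgdom i hx0⟩ : Ordinal)}
    have hg1 : ∀ i, g1 i ∈ PSet κ ρ.ord := by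
      intro i
      constructor
      · rintro y ⟨x, hx0, rfl⟩
        exact (E gg i _).2
      · have hsur : Function.Surjective (fun x : ↥(g0 i) =>
            (⟨(E gg i ⟨x.1, hgdom i x.2⟩ : Ordinal), ⟨x.1, x.2, rfl⟩⟩ : ↥(g1 i))) := by
          rintro ⟨y, x, hx0, rfl⟩
          exact ⟨⟨x, hx0⟩, rfl⟩
        exact (Cardinal.mk_le_of_surjective hsur).trans_lt (hg0 i).2
    obtain ⟨f, hfF, hfdom⟩ := hFdom g1 hg1
    refine ⟨comb (⟨f, hfF⟩, gg), ⟨(⟨f, hfF⟩, gg), rfl⟩, ?_⟩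
    intro i x hx0
    exact ⟨hgdom i hx0, hfdom i ⟨x, hx0, rfl⟩⟩
  · rw [← hF, ← hG]
    refine Cardinal.mk_range_le.trans ?_
    rw [Cardinal.mk_prod, Cardinal.lift_id, Cardinal.lift_id]

private lemma dNum_mono {κ ρ lam : Cardinal.{0}} {ν ν' : Cardinal.{1}}
    (hκ0 : κ ≠ 0) (hrl : ρ ≤ lam) (hν : ν ≤ ν') :
    dNum κ ρ.ord ν ≤ dNum κ lam.ord ν' := by
  obtain ⟨H, hH, hval, hdom⟩ := dNum_spec κ lam.ord ν'
  have hemb : Nonempty (ν.ord.ToType ↪ ν'.ord.ToType) := by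
    rw [← Cardinal.le_def]
    simpa [Cardinal.mk_toType, Cardinal.card_ord] using hν
  obtain ⟨ι⟩ := hemb
  let comb : ↥H → ν.ord.ToType → Set Ordinal.{0} := fun h i => h.1 (ι i) ∩ Set.Iio ρ.ord
  refine dNum_le (Set.range comb) ?_ ?_ (Cardinal.mk_range_le.trans (le_of_eq hH))
  · rintro f ⟨h, rfl⟩ i
    exact ⟨Set.inter_subset_right,
      (Cardinal.mk_le_mk_of_subset Set.inter_subset_left).trans_lt (hval h.1 h.2 (ι i)).2⟩
  · intro g hg
    let g' : ν'.ord.ToType → Set Ordinal.{0} := Function.extend ι g (fun _ => ∅)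
    have hg' : ∀ j, g' j ∈ PSet κ lam.ord := by
      intro j
      by_cases hj : ∃ i, ι i = j
      · obtain ⟨i, rfl⟩ := hj
        show Function.extend ι g (fun _ => ∅) (ι i) ∈ _
        rw [ι.injective.extend_apply]
        exact ⟨(hg i).1.trans (Set.Iio_subset_Iio (Cardinal.ord_le_ord.2 hrl)), (hg i).2⟩
      · show Function.extend ι g (fun _ => ∅) j ∈ _
        rw [Function.extend_apply' _ _ _ hj]
        refine ⟨Set.empty_subset _, ?_⟩
        rw [Cardinal.mk_emptyCollection]
        exact pos_iff_ne_zero.2 (by simpa using hκ0)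
    obtain ⟨h, hhH, hhdom⟩ := hdom g' hg'
    refine ⟨comb ⟨h, hhH⟩, ⟨⟨h, hhH⟩, rfl⟩, ?_⟩
    intro i x hx
    refine ⟨?_, (hg i).1 hx⟩
    have := hhdom (ι i)
    rw [show g' (ι i) = g i from ι.injective.extend_apply _ _ _] at this
    exact this hx

private lemma dNum_succ_le {κ ρ lam μ' : Cardinal.{0}}
    (hκ : ℵ₀ ≤ κ) (hρ : ℵ₀ ≤ ρ) (hκρ : κ ≤ ρ) :
    dNum (Order.succ ρ) lam.ord (Cardinal.lift.{1} μ') ≤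
      dNum κ lam.ord (Cardinal.lift.{1} (μ' * ρ)) := by
  obtain ⟨H, hH, hval, hdom⟩ := dNum_spec κ lam.ord (Cardinal.lift.{1} (μ' * ρ))
  have hpair : Nonempty ((Cardinal.lift.{1} (μ' * ρ)).ord.ToType ≃
      (Cardinal.lift.{1} μ').ord.ToType × ↥(Set.Iio ρ.ord)) := by
    rw [← Cardinal.eq]
    simp only [Cardinal.mk_toType, Cardinal.card_ord, Cardinal.mk_prod, Cardinal.lift_id,
      Ordinal.mk_Iio_ordinal, Cardinal.lift_mul]
  obtain ⟨p⟩ := hpair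
  let comb : ↥H → (Cardinal.lift.{1} μ').ord.ToType → Set Ordinal.{0} := fun h i => ⋃ j : ↥(Set.Iio ρ.ord), h.1 (p.symm (i, j))
  have hcsub : ∀ (h : ↥H) (i : (Cardinal.lift.{1} μ').ord.ToType), comb h i ⊆ Set.Iio lam.ord := fun h i =>
    Set.iUnion_subset fun j => (hval h.1 h.2 _).1
  have hreg : (Cardinal.lift.{1} (Order.succ ρ)).IsRegular :=
    isRegular_lift (Cardinal.isRegular_succ hρ)
  have hcsize : ∀ (h : ↥H) i, #↥(comb h i) < Cardinal.lift.{1} (Order.succ ρ) := by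
    intro h i
    refine Cardinal.mk_iUnion_le_sum_mk.trans_lt
      (Cardinal.sum_lt_of_isRegular hreg ?_ fun j => ?_)
    · rw [Ordinal.mk_Iio_ordinal, Cardinal.card_ord, Cardinal.lift_succ]
      exact Order.lt_succ_of_le le_rfl |>.trans_le (le_of_eq rfl) |>.trans_le le_rfl
    · exact ((hval h.1 h.2 _).2).trans_le
        (Cardinal.lift_le.2 (hκρ.trans (Order.le_succ ρ)))
  refine dNum_le (Set.range comb) ?_ ?_ (Cardinal.mk_range_le.trans (le_of_eq hH))
  · rintro f ⟨h, rfl⟩ i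
    exact ⟨hcsub h i, hcsize h i⟩
  · intro g hg
    have hemb : ∀ i, Nonempty (↥(g i) ↪ ↥(Set.Iio ρ.ord)) := by
      intro i
      rw [← Cardinal.le_def]
      have h2 := (hg i).2
      rw [Cardinal.lift_succ, Order.lt_succ_iff] at h2
      rwa [Ordinal.mk_Iio_ordinal, Cardinal.card_ord]
    let E : ∀ i, ↥(g i) ↪ ↥(Set.Iio ρ.ord) := fun i => (hemb i).some
    let g' : (Cardinal.lift.{1} (μ' * ρ)).ord.ToType → Set Ordinal.{0} := fun t =>
      {x | ∃ hx : x ∈ g (p t).1, E (p t).1 ⟨x, hx⟩ = (p t).2}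
    have hg' : ∀ t, g' t ∈ PSet κ lam.ord := by
      intro t
      constructor
      · intro x hx
        exact (hg (p t).1).1 hx.choose
      · have hss : (g' t).Subsingleton := by
          rintro x ⟨hx, hex⟩ y ⟨hy, hey⟩
          have := (E (p t).1).injective (hex.trans hey.symm)
          exact Subtype.mk_eq_mk.1 this
        exact (Cardinal.mk_le_one_iff_set_subsingleton.2 hss).trans_lt
          (one_lt_aleph0.trans_le (Cardinal.aleph0_le_lift.2 hκ))
    obtain ⟨h, hhH, hhdom⟩ := hdom g' hg'
    refine ⟨comb ⟨h, hhH⟩, ⟨⟨h, hhH⟩, rfl⟩, ?_⟩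
    intro i x hx
    refine Set.mem_iUnion.2 ⟨E i ⟨x, hx⟩, ?_⟩
    refine hhdom (p.symm (i, E i ⟨x, hx⟩)) ?_
    show ∃ hx' : x ∈ g (p (p.symm (i, E i ⟨x, hx⟩))).1, _
    rw [Equiv.apply_symm_apply]
    exact ⟨hx, rfl⟩

private lemma dNum_reg_le {κ ρ lam μ' : Cardinal.{0}}
    (hκ : ℵ₀ ≤ κ) (hρ : ρ.IsRegular) (hκρ : κ ≤ ρ) (hrl : ρ ≤ lam) :
    dNum ρ lam.ord (Cardinal.lift.{1} μ') ≤
      dNum κ lam.ord (Cardinal.lift.{1} (μ' * ρ)) := by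
  obtain ⟨H, hH, hval, hdom⟩ := dNum_spec κ lam.ord (Cardinal.lift.{1} (μ' * ρ))
  have hpair : Nonempty ((Cardinal.lift.{1} (μ' * ρ)).ord.ToType ≃
      (Cardinal.lift.{1} μ').ord.ToType × ↥(Set.Iio ρ.ord)) := by
    rw [← Cardinal.eq]
    simp only [Cardinal.mk_toType, Cardinal.card_ord, Cardinal.mk_prod, Cardinal.lift_id,
      Ordinal.mk_Iio_ordinal, Cardinal.lift_mul]
  obtain ⟨p⟩ := hpair
  have hρ0 : (0 : Ordinal.{0}) < ρ.ord := by
    rw [Cardinal.lt_ord]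
    simpa using (aleph0_pos.trans_le hρ.1)
  let zero : ↥(Set.Iio ρ.ord) := ⟨0, hρ0⟩
  -- the "bound" set extracted from slot zero
  let B : (↥H) → (Cardinal.lift.{1} μ').ord.ToType → Set Ordinal.{0} := fun h i =>
    h.1 (p.symm (i, zero)) ∩ Set.Iio ρ.ord
  let comb : (↥H) → (Cardinal.lift.{1} μ').ord.ToType → Set Ordinal.{0} := fun h i =>
    ⋃ (j' : ↥(B h i)) (j : ↥(Set.Iic (j' : Ordinal))),
      h.1 (p.symm (i, ⟨(j : Ordinal), Set.mem_Iio.2 (lt_of_le_of_lt j.2 (Set.mem_Iio.1 j'.2.2))⟩))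
  have hregρ : (Cardinal.lift.{1} ρ).IsRegular := isRegular_lift hρ
  have hliftκρ : Cardinal.lift.{1} κ ≤ Cardinal.lift.{1} ρ := Cardinal.lift_le.2 hκρ
  have hcsub : ∀ (h : ↥H) i, comb h i ⊆ Set.Iio lam.ord := fun h i =>
    Set.iUnion_subset fun j' => Set.iUnion_subset fun j => (hval h.1 h.2 _).1
  have hcsize : ∀ (h : ↥H) i, #↥(comb h i) < Cardinal.lift.{1} ρ := by
    intro h i
    refine Cardinal.mk_iUnion_le_sum_mk.trans_lt
      (Cardinal.sum_lt_of_isRegular hregρ ?_ fun j' => ?_)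
    · exact ((Cardinal.mk_le_mk_of_subset Set.inter_subset_left).trans_lt
        (hval h.1 h.2 _).2).trans_le hliftκρ
    · refine Cardinal.mk_iUnion_le_sum_mk.trans_lt
        (Cardinal.sum_lt_of_isRegular hregρ ?_ fun j => ?_)
      · have hj' : (j' : Ordinal) < ρ.ord := j'.2.2
        have hsucc : Order.succ (j' : Ordinal) < ρ.ord :=
          (Cardinal.isSuccLimit_ord hρ.1).succ_lt hj'
        rw [← Order.Iio_succ, Ordinal.mk_Iio_ordinal]
        rw [Cardinal.lt_ord] at hsucc
        exact Cardinal.lift_lt.2 hsucc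
      · exact ((hval h.1 h.2 _).2).trans_le hliftκρ
  refine dNum_le (Set.range comb) ?_ ?_ (Cardinal.mk_range_le.trans (le_of_eq hH))
  · rintro f ⟨h, rfl⟩ i
    exact ⟨hcsub h i, hcsize h i⟩
  · intro g hg
    -- choose for each i an ordinal o i < ρ.ord and an equiv of g i with Iio (o i)
    have hch : ∀ i, ∃ o : Ordinal.{0}, o < ρ.ord ∧ Nonempty (↥(g i) ≃ ↥(Set.Iio o)) := by
      intro i
      obtain ⟨c', hc', hlift⟩ := Cardinal.lt_lift_iff.1 ((hg i).2)
      refine ⟨c'.ord, Cardinal.ord_lt_ord.2 hc', ?_⟩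
      rw [← Cardinal.eq, Ordinal.mk_Iio_ordinal, Cardinal.card_ord]
      exact hlift.symm
    choose o ho hE using hch
    let E : ∀ i, ↥(g i) ≃ ↥(Set.Iio (o i)) := fun i => (hE i).some
    let g' : (Cardinal.lift.{1} (μ' * ρ)).ord.ToType → Set Ordinal.{0} := fun t =>
      {x | ((p t).2 = zero ∧ x = o (p t).1) ∨
        ∃ hx : x ∈ g (p t).1, ((E (p t).1 ⟨x, hx⟩ : Ordinal) + 1 = ((p t).2 : Ordinal))}
    have hg' : ∀ t, g' t ∈ PSet κ lam.ord := by
      intro t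
      constructor
      · rintro x (⟨-, rfl⟩ | ⟨hx, -⟩)
        · exact (ho (p t).1).trans_le (Cardinal.ord_le_ord.2 hrl)
        · exact (hg (p t).1).1 hx
      · have hss : (g' t).Subsingleton := by
          rintro x (⟨hz, rfl⟩ | ⟨hx, hex⟩) y (⟨hz', rfl⟩ | ⟨hy, hey⟩)
          · rfl
          · exfalso
            rw [hz] at hey
            exact (Ordinal.succ_ne_zero _) (by rw [← Ordinal.add_one_eq_succ]; exact hey)
          · exfalso
            rw [hz'] at hex
            exact (Ordinal.succ_ne_zero _) (by rw [← Ordinal.add_one_eq_succ]; exact hex)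
          · have h1 : (E (p t).1 ⟨x, hx⟩ : Ordinal) = (E (p t).1 ⟨y, hy⟩ : Ordinal) := by
              have h0 := hex.trans hey.symm
              rw [Ordinal.add_one_eq_succ, Ordinal.add_one_eq_succ] at h0
              exact Order.succ_injective h0
            have h2 := (E (p t).1).injective (Subtype.ext h1)
            exact Subtype.mk_eq_mk.1 h2
        exact (Cardinal.mk_le_one_iff_set_subsingleton.2 hss).trans_lt
          (one_lt_aleph0.trans_le (Cardinal.aleph0_le_lift.2 hκ))
    obtain ⟨h, hhH, hhdom⟩ := hdom g' hg'
    refine ⟨comb ⟨h, hhH⟩, ⟨⟨h, hhH⟩, rfl⟩, ?_⟩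
    intro i x hx
    -- o i belongs to B ⟨h,hhH⟩ i
    have hoB : o i ∈ B ⟨h, hhH⟩ i := by
      refine ⟨hhdom (p.symm (i, zero)) ?_, ho i⟩
      show _ ∈ g' _
      left
      rw [Equiv.apply_symm_apply]
      exact ⟨rfl, rfl⟩
    have hjx : (E i ⟨x, hx⟩ : Ordinal) < o i := (E i ⟨x, hx⟩).2
    have hj1 : (E i ⟨x, hx⟩ : Ordinal) + 1 ≤ o i := by
      rw [Ordinal.add_one_eq_succ]
      exact Order.succ_le_of_lt hjx
    have hjρ : (E i ⟨x, hx⟩ : Ordinal) + 1 < ρ.ord := hj1.trans_lt (ho i)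
    have key : ∀ t, p t = (i, ⟨(E i ⟨x, hx⟩ : Ordinal) + 1, hjρ⟩) → x ∈ g' t := by
      intro t ht
      show ((p t).2 = zero ∧ x = o (p t).1) ∨
        ∃ hx' : x ∈ g (p t).1, ((E (p t).1 ⟨x, hx'⟩ : Ordinal) + 1 = ((p t).2 : Ordinal))
      rw [ht]
      exact Or.inr ⟨hx, rfl⟩
    have hxh : x ∈ h (p.symm (i, ⟨(E i ⟨x, hx⟩ : Ordinal) + 1, hjρ⟩)) :=
      hhdom _ (key _ (p.apply_symm_apply _))
    refine Set.mem_iUnion.2 ⟨⟨o i, hoB⟩, ?_⟩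
    refine Set.mem_iUnion.2 ⟨⟨(E i ⟨x, hx⟩ : Ordinal) + 1, hj1⟩, ?_⟩
    exact hxh


/-- Let `μ` be a nonzero cardinal. Then
(0) `𝔡^μ_{κ,λ} ≤ 𝔡^μ_{κ,ρ} · 𝔡^μ_{ρ⁺,λ} ≤ 𝔡^{μ·ρ}_{κ,λ}` for every cardinal `ρ` with
`κ ≤ ρ < λ`, and
(1) `𝔡^μ_{κ,λ} ≤ 𝔡^μ_{κ,ρ} · 𝔡^μ_{ρ,λ} ≤ 𝔡^{μ·ρ}_{κ,λ}` for every regular cardinal `ρ` with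
`κ ≤ ρ ≤ λ`. -/
theorem stmt19 (κ lam μ : Cardinal.{0})
    (hκ : κ.IsRegular) (hkl : κ ≤ lam) (hμ0 : μ ≠ 0) :
    (∀ ρ : Cardinal.{0}, κ ≤ ρ → ρ < lam →
      dNum κ lam.ord (Cardinal.lift.{1} μ) ≤
          dNum κ ρ.ord (Cardinal.lift.{1} μ) * dNum (Order.succ ρ) lam.ord (Cardinal.lift.{1} μ) ∧
        dNum κ ρ.ord (Cardinal.lift.{1} μ) * dNum (Order.succ ρ) lam.ord (Cardinal.lift.{1} μ) ≤
          dNum κ lam.ord (Cardinal.lift.{1} (μ * ρ))) ∧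
    (∀ ρ : Cardinal.{0}, ρ.IsRegular → κ ≤ ρ → ρ ≤ lam →
      dNum κ lam.ord (Cardinal.lift.{1} μ) ≤
          dNum κ ρ.ord (Cardinal.lift.{1} μ) * dNum ρ lam.ord (Cardinal.lift.{1} μ) ∧
        dNum κ ρ.ord (Cardinal.lift.{1} μ) * dNum ρ lam.ord (Cardinal.lift.{1} μ) ≤
          dNum κ lam.ord (Cardinal.lift.{1} (μ * ρ))) := by
  have hℵκ : ℵ₀ ≤ κ := hκ.1
  have hκ0 : κ ≠ 0 := hκ.pos.ne'
  constructor
  · intro ρ hκρ hrl2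
    have hρ : ℵ₀ ≤ ρ := hℵκ.trans hκρ
    have hρ0 : ρ ≠ 0 := (aleph0_pos.trans_le hρ).ne'
    have hμρ0 : Cardinal.lift.{1} (μ * ρ) ≠ 0 := by
      simp [Cardinal.lift_eq_zero, hμ0, hρ0, mul_eq_zero]
    have hd : ℵ₀ ≤ dNum κ lam.ord (Cardinal.lift.{1} (μ * ρ)) :=
      (Cardinal.aleph0_le_lift.2 hℵκ).trans (lift_le_dNum hκ hkl hμρ0)
    refine ⟨dNum_le_mul (hκρ.trans (Order.le_succ ρ)) le_rfl, ?_⟩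
    have h1 : dNum κ ρ.ord (Cardinal.lift.{1} μ) ≤ dNum κ lam.ord (Cardinal.lift.{1} (μ * ρ)) :=
      dNum_mono hκ0 hrl2.le (Cardinal.lift_le.2 (Cardinal.le_mul_right hρ0))
    have h2 : dNum (Order.succ ρ) lam.ord (Cardinal.lift.{1} μ) ≤
        dNum κ lam.ord (Cardinal.lift.{1} (μ * ρ)) := dNum_succ_le hℵκ hρ hκρ
    exact (Cardinal.mul_le_max _ _).trans (max_le (max_le h1 h2) hd)
  · intro ρ hρreg hκρ hrl2
    have hρ : ℵ₀ ≤ ρ := hρreg.1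
    have hρ0 : ρ ≠ 0 := (aleph0_pos.trans_le hρ).ne'
    have hμρ0 : Cardinal.lift.{1} (μ * ρ) ≠ 0 := by
      simp [Cardinal.lift_eq_zero, hμ0, hρ0, mul_eq_zero]
    have hd : ℵ₀ ≤ dNum κ lam.ord (Cardinal.lift.{1} (μ * ρ)) :=
      (Cardinal.aleph0_le_lift.2 hℵκ).trans (lift_le_dNum hκ hkl hμρ0)
    refine ⟨dNum_le_mul hκρ (Order.le_succ ρ), ?_⟩
    have h1 : dNum κ ρ.ord (Cardinal.lift.{1} μ) ≤ dNum κ lam.ord (Cardinal.lift.{1} (μ * ρ)) :=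
      dNum_mono hκ0 hrl2 (Cardinal.lift_le.2 (Cardinal.le_mul_right hρ0))
    have h2 : dNum ρ lam.ord (Cardinal.lift.{1} μ) ≤
        dNum κ lam.ord (Cardinal.lift.{1} (μ * ρ)) := dNum_reg_le hℵκ hρreg hκρ hrl2
    exact (Cardinal.mul_le_max _ _).trans (max_le (max_le h1 h2) hd)

end PklNormal
end
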